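/- For any two triangular partitions τ and ν, their join in the lattice of triangular partitions ordered by containment is ℕ² ∩ Conv(τ ∪ ν), and their meet is ℕ² \ (ℕ² ∩ Conv(ℕ² \ (τ ∩ ν))). -/

import Mathlib

open Set

/-- The positive quadrant of lattice points, representing ℕ² in the paper. -/
def posQuad : Set (ℕ × ℕ) := {c | 1 ≤ c.1 ∧ 1 ≤ c.2}

/-- Embedding of lattice cells into the real plane. -/
noncomputable def toR2 (c : ℕ × ℕ) : ℝ × ℝ := ((c.1 : ℝ), (c.2 : ℝ))

/-- A set of cells is triangular if it consists exactly of the points of ℕ²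
lying weakly below some line x/r + y/s = 1 with r, s > 0. -/
def IsTriangularSet (S : Set (ℕ × ℕ)) : Prop :=
  ∃ r s : ℝ, 0 < r ∧ 0 < s ∧
    S = {c : ℕ × ℕ | 1 ≤ c.1 ∧ 1 ≤ c.2 ∧ (c.1 : ℝ) / r + (c.2 : ℝ) / s ≤ 1}

/-- `S` is the Ferrers diagram of an integer partition. -/
def IsPartitionSet (S : Set (ℕ × ℕ)) : Prop :=
  S.Finite ∧ S ⊆ posQuad ∧
    ∀ c ∈ S, ∀ a b : ℕ, 1 ≤ a → a ≤ c.1 → 1 ≤ b → b ≤ c.2 → (a, b) ∈ S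

/-- A cell is removable if deleting it yields a triangular partition. -/
def RemovableCell (S : Set (ℕ × ℕ)) (c : ℕ × ℕ) : Prop :=
  c ∈ S ∧ IsTriangularSet (S \ {c})

/-- A cell of the complement is addable if adjoining it yields a triangular partition. -/
def AddableCell (S : Set (ℕ × ℕ)) (c : ℕ × ℕ) : Prop :=
  c ∈ posQuad \ S ∧ IsTriangularSet (insert c S)

/-- The poset of triangular partitions ordered by containment. -/
abbrev TriPart := {S : Set (ℕ × ℕ) // IsTriangularSet S}

set_option linter.unusedSectionVars false

namespace Stmt6

abbrev Pt := ℝ × ℝ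

lemma seg_mem (x y : Pt) {a b : ℝ} (ha : 0 ≤ a) (hb : 0 ≤ b) (hab : a + b = 1) :
    a • x + b • y ∈ segment ℝ x y := ⟨a, b, ha, hb, hab, rfl⟩

lemma smul_add_fst (a b : ℝ) (x y : Pt) : (a • x + b • y).1 = a * x.1 + b * y.1 := rfl
lemma smul_add_snd (a b : ℝ) (x y : Pt) : (a • x + b • y).2 = a * x.2 + b * y.2 := rfl

set_option maxHeartbeats 3000000 in
lemma segKillSteep (a1 a2 b1 b2 z : Pt) (l m : ℝ)
    (hl0 : 0 < l) (hl1 : l < 1) (hm0 : 0 < m) (hm1 : m < 1)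
    (hza : z = (1-l) • a1 + l • a2)
    (hzb : z = (1-m) • b1 + m • b2)
    (hpA : a1.1 < a2.1) (hqA : a2.2 < a1.2)
    (hpB : b1.1 < b2.1) (hqB : b2.2 < b1.2)
    (steep : (b1.2 - b2.2) * (a2.1 - a1.1) < (a1.2 - a2.2) * (b2.1 - b1.1))
    (DKA1 : ∀ w ∈ segment ℝ b1 b2, ¬ (w ≤ a1))
    (DKB1 : ∀ v ∈ segment ℝ a1 a2, ¬ (b1 ≤ v)) : False := by
  have hz1 : z.1 = (1-l) * a1.1 + l * a2.1 := by rw [hza]; rfl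
  have hz2 : z.2 = (1-l) * a1.2 + l * a2.2 := by rw [hza]; rfl
  have hw1 : z.1 = (1-m) * b1.1 + m * b2.1 := by rw [hzb]; rfl
  have hw2 : z.2 = (1-m) * b1.2 + m * b2.2 := by rw [hzb]; rfl
  have hA2 : l * (a1.2 - a2.2) = a1.2 - z.2 := by linear_combination hz2
  have hA1 : l * (a2.1 - a1.1) = z.1 - a1.1 := by linear_combination -hz1
  have hB2 : m * (b1.2 - b2.2) = b1.2 - z.2 := by linear_combination hw2
  have hB1 : m * (b2.1 - b1.1) = z.1 - b1.1 := by linear_combination -hw1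
  have hqA0 : (0:ℝ) < a1.2 - a2.2 := by linarith
  have hqB0 : (0:ℝ) < b1.2 - b2.2 := by linarith
  have hpA0 : (0:ℝ) < a2.1 - a1.1 := by linarith
  have hpB0 : (0:ℝ) < b2.1 - b1.1 := by linarith
  have hza2 : z.2 < a1.2 := by nlinarith [mul_pos hl0 hqA0]
  have hzb2 : z.2 < b1.2 := by nlinarith [mul_pos hm0 hqB0]
  by_cases hcase : b1.2 ≤ a1.2
  · -- kill via DKB1 : find v on [a1,a2] with v.2 = b1.2, v.1 > b1.1
    have hden : (0:ℝ) < a1.2 - z.2 := by linarith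
    have hf : (b1.2 - z.2)/(a1.2 - z.2) * (a1.2 - z.2) = b1.2 - z.2 :=
      div_mul_cancel₀ _ (ne_of_gt hden)
    obtain ⟨c, hc⟩ : ∃ c : ℝ, c = l - l * ((b1.2 - z.2)/(a1.2 - z.2)) := ⟨_, rfl⟩
    have hfrac0 : 0 < (b1.2 - z.2)/(a1.2 - z.2) := div_pos (by linarith) hden
    have hfrac1 : (b1.2 - z.2)/(a1.2 - z.2) ≤ 1 := by
      rw [div_le_one hden]; linarith
    have hc0 : 0 ≤ c := by
      have := mul_nonneg hl0.le (by linarith : (0:ℝ) ≤ 1 - (b1.2 - z.2)/(a1.2 - z.2))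
      rw [hc]; nlinarith
    have hc1 : c < l := by
      have := mul_pos hl0 hfrac0
      rw [hc]; nlinarith
    have hcqA : c * (a1.2 - a2.2) = a1.2 - b1.2 := by
      rw [hc]
      linear_combination (1 - (b1.2 - z.2)/(a1.2 - z.2)) * hA2 - hf
    have hlc : (l - c) * (a1.2 - a2.2) = b1.2 - z.2 := by linear_combination hA2 - hcqA
    have hv2 : ((1-c) • a1 + c • a2).2 = b1.2 := by
      rw [smul_add_snd]; linear_combination -hcqA
    have hv1 : b1.1 < ((1-c) • a1 + c • a2).1 := by
      rw [smul_add_fst]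
      have hdiff : ((1-c)*a1.1 + c*a2.1 - b1.1) * ((a1.2-a2.2)*(b1.2-b2.2))
          = (b1.2 - z.2) * ((a1.2-a2.2)*(b2.1-b1.1) - (b1.2-b2.2)*(a2.1-a1.1)) := by
        linear_combination ((a1.2-a2.2)*(b1.2-b2.2)) * hA1 - ((a1.2-a2.2)*(b1.2-b2.2)) * hB1
          + ((a1.2-a2.2)*(b2.1-b1.1)) * hB2 - ((b1.2-b2.2)*(a2.1-a1.1)) * hlc
      nlinarith [mul_pos hqA0 hqB0,
        mul_pos (by linarith : (0:ℝ) < b1.2 - z.2)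
          (by linarith : (0:ℝ) < (a1.2-a2.2)*(b2.1-b1.1) - (b1.2-b2.2)*(a2.1-a1.1))]
    have hmem : ((1-c) • a1 + c • a2) ∈ segment ℝ a1 a2 :=
      seg_mem a1 a2 (by linarith) hc0 (by ring)
    exact DKB1 _ hmem ⟨le_of_lt hv1, le_of_eq hv2.symm⟩
  · -- kill via DKA1 : find w on [b1,b2] with w.2 = a1.2, w.1 < a1.1
    push_neg at hcase
    have hden : (0:ℝ) < b1.2 - z.2 := by linarith
    have hf : (a1.2 - z.2)/(b1.2 - z.2) * (b1.2 - z.2) = a1.2 - z.2 :=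
      div_mul_cancel₀ _ (ne_of_gt hden)
    obtain ⟨c, hc⟩ : ∃ c : ℝ, c = m - m * ((a1.2 - z.2)/(b1.2 - z.2)) := ⟨_, rfl⟩
    have hfrac0 : 0 < (a1.2 - z.2)/(b1.2 - z.2) := div_pos (by linarith) hden
    have hfrac1 : (a1.2 - z.2)/(b1.2 - z.2) ≤ 1 := by
      rw [div_le_one hden]; linarith
    have hc0 : 0 ≤ c := by
      have := mul_nonneg hm0.le (by linarith : (0:ℝ) ≤ 1 - (a1.2 - z.2)/(b1.2 - z.2))
      rw [hc]; nlinarith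
    have hc1 : c < m := by
      have := mul_pos hm0 hfrac0
      rw [hc]; nlinarith
    have hcqB : c * (b1.2 - b2.2) = b1.2 - a1.2 := by
      rw [hc]
      linear_combination (1 - (a1.2 - z.2)/(b1.2 - z.2)) * hB2 - hf
    have hmc : (m - c) * (b1.2 - b2.2) = a1.2 - z.2 := by linear_combination hB2 - hcqB
    have hv2 : ((1-c) • b1 + c • b2).2 = a1.2 := by
      rw [smul_add_snd]; linear_combination -hcqB
    have hv1 : ((1-c) • b1 + c • b2).1 < a1.1 := by
      rw [smul_add_fst]
      have hdiff : (a1.1 - ((1-c)*b1.1 + c*b2.1)) * ((a1.2-a2.2)*(b1.2-b2.2))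
          = (a1.2 - z.2) * ((a1.2-a2.2)*(b2.1-b1.1) - (b1.2-b2.2)*(a2.1-a1.1)) := by
        linear_combination ((a1.2-a2.2)*(b1.2-b2.2)) * hA1 - ((a1.2-a2.2)*(b1.2-b2.2)) * hB1
          + ((a1.2-a2.2)*(b2.1-b1.1)) * hmc - ((b1.2-b2.2)*(a2.1-a1.1)) * hA2
      nlinarith [mul_pos hqA0 hqB0,
        mul_pos (by linarith : (0:ℝ) < a1.2 - z.2)
          (by linarith : (0:ℝ) < (a1.2-a2.2)*(b2.1-b1.1) - (b1.2-b2.2)*(a2.1-a1.1))]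
    have hmem : ((1-c) • b1 + c • b2) ∈ segment ℝ b1 b2 :=
      seg_mem b1 b2 (by linarith) hc0 (by ring)
    exact DKA1 _ hmem ⟨le_of_lt hv1, le_of_eq hv2⟩

end Stmt6

namespace Stmt6

set_option maxHeartbeats 2000000 in
lemma coreA (a1 a2 b1 b2 z : Pt) (l m : ℝ)
    (hl0 : 0 < l) (hl1 : l < 1) (hm0 : 0 < m) (hm1 : m < 1)
    (hza : z = (1-l) • a1 + l • a2)
    (hzb : z = (1-m) • b1 + m • b2)
    (hpA : a1.1 < a2.1) (hqA : a2.2 < a1.2)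
    (hpB : b1.1 < b2.1) (hqB : b2.2 < b1.2)
    (DKA : ∀ w ∈ segment ℝ b1 b2, ¬ (w ≤ a1) ∧ ¬ (w ≤ a2))
    (DKB : ∀ v ∈ segment ℝ a1 a2, ¬ (b1 ≤ v) ∧ ¬ (b2 ≤ v)) : False := by
  have hz1 : z.1 = (1-l) * a1.1 + l * a2.1 := by rw [hza]; rfl
  have hz2 : z.2 = (1-l) * a1.2 + l * a2.2 := by rw [hza]; rfl
  have hw1 : z.1 = (1-m) * b1.1 + m * b2.1 := by rw [hzb]; rfl
  have hw2 : z.2 = (1-m) * b1.2 + m * b2.2 := by rw [hzb]; rfl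
  have hA2 : l * (a1.2 - a2.2) = a1.2 - z.2 := by linear_combination hz2
  have hA1 : l * (a2.1 - a1.1) = z.1 - a1.1 := by linear_combination -hz1
  have hB2 : m * (b1.2 - b2.2) = b1.2 - z.2 := by linear_combination hw2
  have hB1 : m * (b2.1 - b1.1) = z.1 - b1.1 := by linear_combination -hw1
  have hpA0 : (0:ℝ) < a2.1 - a1.1 := by linarith
  have hqA0 : (0:ℝ) < a1.2 - a2.2 := by linarith
  have hpB0 : (0:ℝ) < b2.1 - b1.1 := by linarith
  have hqB0 : (0:ℝ) < b1.2 - b2.2 := by linarith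
  rcases lt_trichotomy ((b1.2 - b2.2) * (a2.1 - a1.1)) ((a1.2 - a2.2) * (b2.1 - b1.1))
    with hS | hS | hS
  · exact segKillSteep a1 a2 b1 b2 z l m hl0 hl1 hm0 hm1 hza hzb hpA hqA hpB hqB hS
      (fun w hw => (DKA w hw).1) (fun v hv => (DKB v hv).1)
  · -- collinear case
    by_cases hd : m * (b2.1 - b1.1) ≤ l * (a2.1 - a1.1)
    · obtain ⟨c, hc⟩ : ∃ c : ℝ, c = (l * (a2.1-a1.1) - m * (b2.1-b1.1))/(a2.1-a1.1) := ⟨_, rfl⟩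
      have e1 : c * (a2.1-a1.1) = l * (a2.1-a1.1) - m * (b2.1-b1.1) := by
        rw [hc]; field_simp
      have hc0 : 0 ≤ c := by
        rw [hc]; apply div_nonneg (by linarith) hpA0.le
      have hc1 : c ≤ l := by
        have h2 : c * (a2.1-a1.1) ≤ l * (a2.1-a1.1) := by
          rw [e1]; nlinarith [mul_pos hm0 hpB0]
        exact le_of_mul_le_mul_right (by linarith [h2]) hpA0
      have e2 : c * (a1.2-a2.2) = l * (a1.2-a2.2) - m * (b1.2-b2.2) := by
        have h3 : (c * (a1.2-a2.2)) * (a2.1-a1.1)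
            = (l * (a1.2-a2.2) - m * (b1.2-b2.2)) * (a2.1-a1.1) := by
          linear_combination (a1.2-a2.2) * e1 + m * hS
        exact mul_right_cancel₀ (ne_of_gt hpA0) h3
      have hbeq : (1-c) • a1 + c • a2 = b1 := by
        have h1 : ((1-c) • a1 + c • a2).1 = b1.1 := by
          rw [smul_add_fst]; linear_combination e1 + hA1 - hB1
        have h2 : ((1-c) • a1 + c • a2).2 = b1.2 := by
          rw [smul_add_snd]; linear_combination -e2 - hA2 + hB2
        exact Prod.ext h1 h2
      have hmem : b1 ∈ segment ℝ a1 a2 := by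
        rw [← hbeq]; exact seg_mem a1 a2 (by linarith) hc0 (by ring)
      exact (DKB b1 hmem).1 le_rfl
    · push_neg at hd
      obtain ⟨c, hc⟩ : ∃ c : ℝ, c = (m * (b2.1-b1.1) - l * (a2.1-a1.1))/(b2.1-b1.1) := ⟨_, rfl⟩
      have e1 : c * (b2.1-b1.1) = m * (b2.1-b1.1) - l * (a2.1-a1.1) := by
        rw [hc]; field_simp
      have hc0 : 0 ≤ c := by
        rw [hc]; apply div_nonneg (by linarith) hpB0.le
      have hc1 : c ≤ m := by
        have h2 : c * (b2.1-b1.1) ≤ m * (b2.1-b1.1) := by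
          rw [e1]; nlinarith [mul_pos hl0 hpA0]
        exact le_of_mul_le_mul_right (by linarith [h2]) hpB0
      have e2 : c * (b1.2-b2.2) = m * (b1.2-b2.2) - l * (a1.2-a2.2) := by
        have h3 : (c * (b1.2-b2.2)) * (b2.1-b1.1)
            = (m * (b1.2-b2.2) - l * (a1.2-a2.2)) * (b2.1-b1.1) := by
          linear_combination (b1.2-b2.2) * e1 - l * hS
        exact mul_right_cancel₀ (ne_of_gt hpB0) h3
      have haeq : (1-c) • b1 + c • b2 = a1 := by
        have h1 : ((1-c) • b1 + c • b2).1 = a1.1 := by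
          rw [smul_add_fst]; linear_combination e1 + hB1 - hA1
        have h2 : ((1-c) • b1 + c • b2).2 = a1.2 := by
          rw [smul_add_snd]; linear_combination -e2 - hB2 + hA2
        exact Prod.ext h1 h2
      have hmem : a1 ∈ segment ℝ b1 b2 := by
        rw [← haeq]; exact seg_mem b1 b2 (by linarith) hc0 (by ring)
      exact (DKA a1 hmem).1 le_rfl
  · -- shallow case: swap coordinates
    have hza' : ((z.2, z.1) : Pt) = (1-(1-l)) • ((a2.2, a2.1) : Pt) + (1-l) • ((a1.2, a1.1) : Pt) := by
      apply Prod.ext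
      · show z.2 = (1-(1-l)) * a2.2 + (1-l) * a1.2
        rw [hz2]; ring
      · show z.1 = (1-(1-l)) * a2.1 + (1-l) * a1.1
        rw [hz1]; ring
    have hzb' : ((z.2, z.1) : Pt) = (1-(1-m)) • ((b2.2, b2.1) : Pt) + (1-m) • ((b1.2, b1.1) : Pt) := by
      apply Prod.ext
      · show z.2 = (1-(1-m)) * b2.2 + (1-m) * b1.2
        rw [hw2]; ring
      · show z.1 = (1-(1-m)) * b2.1 + (1-m) * b1.1
        rw [hw1]; ring
    refine segKillSteep (a2.2, a2.1) (a1.2, a1.1) (b2.2, b2.1) (b1.2, b1.1) (z.2, z.1)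
      (1-l) (1-m) (by linarith) (by linarith) (by linarith) (by linarith)
      hza' hzb' hqA hpA hqB hpB (by dsimp only; nlinarith) ?_ ?_
    · rintro w ⟨s, t, hs, ht, hst, rfl⟩
      intro hle
      have hmem : t • b1 + s • b2 ∈ segment ℝ b1 b2 :=
        seg_mem b1 b2 ht hs (by linarith)
      refine (DKA _ hmem).2 ?_
      constructor
      · show t * b1.1 + s * b2.1 ≤ a2.1
        have h := hle.2
        simp only [smul_add_snd] at h
        linarith
      · show t * b1.2 + s * b2.2 ≤ a2.2
        have h := hle.1
        simp only [smul_add_fst] at h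
        linarith
    · rintro v ⟨s, t, hs, ht, hst, rfl⟩
      intro hle
      have hmem : t • a1 + s • a2 ∈ segment ℝ a1 a2 :=
        seg_mem a1 a2 ht hs (by linarith)
      refine (DKB _ hmem).2 ?_
      constructor
      · show b2.1 ≤ t * a1.1 + s * a2.1
        have h := hle.2
        simp only [smul_add_snd] at h
        linarith
      · show b2.2 ≤ t * a1.2 + s * a2.2
        have h := hle.1
        simp only [smul_add_fst] at h
        linarith

end Stmt6

namespace Stmt6

lemma isLinearMap_lf (r s : ℝ) : IsLinearMap ℝ (fun p : Pt => p.1/r + p.2/s) := by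
  constructor
  · intro p q
    show (p.1 + q.1)/r + (p.2 + q.2)/s = _
    ring
  · intro c p
    show (c * p.1)/r + (c * p.2)/s = c * (p.1/r + p.2/s)
    ring

lemma isLinearMap_fst : IsLinearMap ℝ (fun p : Pt => p.1) :=
  ⟨fun _ _ => rfl, fun _ _ => rfl⟩

lemma isLinearMap_snd : IsLinearMap ℝ (fun p : Pt => p.2) :=
  ⟨fun _ _ => rfl, fun _ _ => rfl⟩

lemma convex_quadrant : Convex ℝ {p : Pt | 1 ≤ p.1 ∧ 1 ≤ p.2} := by
  have h1 := convex_halfSpace_ge isLinearMap_fst (1:ℝ)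
  have h2 := convex_halfSpace_ge isLinearMap_snd (1:ℝ)
  have : {p : Pt | 1 ≤ p.1 ∧ 1 ≤ p.2} = {p : Pt | 1 ≤ p.1} ∩ {p : Pt | 1 ≤ p.2} := rfl
  rw [this]
  exact h1.inter h2

lemma hull_quadrant {S : Set (ℕ × ℕ)} (hS : S ⊆ posQuad) :
    convexHull ℝ (toR2 '' S) ⊆ {p : Pt | 1 ≤ p.1 ∧ 1 ≤ p.2} := by
  apply convexHull_min _ convex_quadrant
  rintro p ⟨c, hc, rfl⟩
  obtain ⟨h1, h2⟩ := hS hc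
  constructor
  · show (1:ℝ) ≤ (c.1 : ℝ)
    exact_mod_cast h1
  · show (1:ℝ) ≤ (c.2 : ℝ)
    exact_mod_cast h2

section DownClosed

variable {S : Set (ℕ × ℕ)} (hpos : S ⊆ posQuad)
  (hdc : ∀ c ∈ S, ∀ c' : ℕ × ℕ, c' ∈ posQuad → c'.1 ≤ c.1 → c'.2 ≤ c.2 → c' ∈ S)

include hpos hdc

lemma hull_bottom : ∀ p ∈ convexHull ℝ (toR2 '' S), ((p.1, (1:ℝ)) : Pt) ∈ convexHull ℝ (toR2 '' S) := by
  have hsub : convexHull ℝ (toR2 '' S) ⊆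
      {p : Pt | p ∈ convexHull ℝ (toR2 '' S) ∧ ((p.1, (1:ℝ)) : Pt) ∈ convexHull ℝ (toR2 '' S)} := by
    apply convexHull_min
    · rintro p ⟨c, hc, rfl⟩
      refine ⟨subset_convexHull ℝ _ ⟨c, hc, rfl⟩, ?_⟩
      have hmem : ((c.1, 1) : ℕ × ℕ) ∈ S := by
        apply hdc c hc
        · exact ⟨(hpos hc).1, le_refl 1⟩
        · exact le_refl _
        · exact (hpos hc).2
      refine subset_convexHull ℝ _ ⟨(c.1, 1), hmem, ?_⟩
      simp [toR2]
    · rintro p ⟨hp, hp'⟩ q ⟨hq, hq'⟩ a b ha hb hab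
      constructor
      · exact (convex_convexHull ℝ _) hp hq ha hb hab
      · have : (((a • p + b • q).1, (1:ℝ)) : Pt) = a • ((p.1, (1:ℝ)) : Pt) + b • ((q.1, (1:ℝ)) : Pt) := by
          apply Prod.ext
          · rfl
          · show (1:ℝ) = a * 1 + b * 1
            rw [mul_one, mul_one]; exact hab.symm
        rw [this]
        exact (convex_convexHull ℝ _) hp' hq' ha hb hab
  intro p hp
  exact (hsub hp).2

lemma hull_left : ∀ p ∈ convexHull ℝ (toR2 '' S), (((1:ℝ), p.2) : Pt) ∈ convexHull ℝ (toR2 '' S) := by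
  have hsub : convexHull ℝ (toR2 '' S) ⊆
      {p : Pt | p ∈ convexHull ℝ (toR2 '' S) ∧ (((1:ℝ), p.2) : Pt) ∈ convexHull ℝ (toR2 '' S)} := by
    apply convexHull_min
    · rintro p ⟨c, hc, rfl⟩
      refine ⟨subset_convexHull ℝ _ ⟨c, hc, rfl⟩, ?_⟩
      have hmem : ((1, c.2) : ℕ × ℕ) ∈ S := by
        apply hdc c hc
        · exact ⟨le_refl 1, (hpos hc).2⟩
        · exact (hpos hc).1
        · exact le_refl _
      refine subset_convexHull ℝ _ ⟨(1, c.2), hmem, ?_⟩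
      simp [toR2]
    · rintro p ⟨hp, hp'⟩ q ⟨hq, hq'⟩ a b ha hb hab
      constructor
      · exact (convex_convexHull ℝ _) hp hq ha hb hab
      · have : (((1:ℝ), (a • p + b • q).2) : Pt) = a • (((1:ℝ), p.2) : Pt) + b • (((1:ℝ), q.2) : Pt) := by
          apply Prod.ext
          · show (1:ℝ) = a * 1 + b * 1
            rw [mul_one, mul_one]; exact hab.symm
          · rfl
        rw [this]
        exact (convex_convexHull ℝ _) hp' hq' ha hb hab
  intro p hp
  exact (hsub hp).2

lemma hull_down_vert : ∀ p ∈ convexHull ℝ (toR2 '' S), ∀ y : ℝ, 1 ≤ y → y ≤ p.2 →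
    ((p.1, y) : Pt) ∈ convexHull ℝ (toR2 '' S) := by
  intro p hp y hy1 hy2
  by_cases hp2 : p.2 ≤ 1
  · have hyeq : y = 1 := le_antisymm (le_trans hy2 hp2) hy1
    rw [hyeq]
    exact hull_bottom hpos hdc p hp
  · push_neg at hp2
    obtain ⟨t, ht⟩ : ∃ t : ℝ, t = (p.2 - y)/(p.2 - 1) := ⟨_, rfl⟩
    have hden : (0:ℝ) < p.2 - 1 := by linarith
    have ht0 : 0 ≤ t := by rw [ht]; apply div_nonneg (by linarith) hden.le
    have ht1 : t ≤ 1 := by rw [ht, div_le_one hden]; linarith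
    have htmul : t * (p.2 - 1) = p.2 - y := by rw [ht]; field_simp
    have heq : ((p.1, y) : Pt) = t • ((p.1, (1:ℝ)) : Pt) + (1-t) • p := by
      apply Prod.ext
      · show p.1 = t * p.1 + (1-t) * p.1
        ring
      · show y = t * 1 + (1-t) * p.2
        linear_combination htmul
    rw [heq]
    exact (convex_convexHull ℝ _) (hull_bottom hpos hdc p hp) hp ht0 (by linarith) (by ring)

lemma hull_down_horiz : ∀ p ∈ convexHull ℝ (toR2 '' S), ∀ x : ℝ, 1 ≤ x → x ≤ p.1 →
    ((x, p.2) : Pt) ∈ convexHull ℝ (toR2 '' S) := by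
  intro p hp x hx1 hx2
  by_cases hp1 : p.1 ≤ 1
  · have hxeq : x = 1 := le_antisymm (le_trans hx2 hp1) hx1
    rw [hxeq]
    exact hull_left hpos hdc p hp
  · push_neg at hp1
    obtain ⟨t, ht⟩ : ∃ t : ℝ, t = (p.1 - x)/(p.1 - 1) := ⟨_, rfl⟩
    have hden : (0:ℝ) < p.1 - 1 := by linarith
    have ht0 : 0 ≤ t := by rw [ht]; apply div_nonneg (by linarith) hden.le
    have ht1 : t ≤ 1 := by rw [ht, div_le_one hden]; linarith
    have htmul : t * (p.1 - 1) = p.1 - x := by rw [ht]; field_simp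
    have heq : ((x, p.2) : Pt) = t • (((1:ℝ), p.2) : Pt) + (1-t) • p := by
      apply Prod.ext
      · show x = t * 1 + (1-t) * p.1
        linear_combination htmul
      · show p.2 = t * p.2 + (1-t) * p.2
        ring
    rw [heq]
    exact (convex_convexHull ℝ _) (hull_left hpos hdc p hp) hp ht0 (by linarith) (by ring)

lemma hull_downclosed : ∀ p ∈ convexHull ℝ (toR2 '' S), ∀ q : Pt,
    1 ≤ q.1 → 1 ≤ q.2 → q.1 ≤ p.1 → q.2 ≤ p.2 → q ∈ convexHull ℝ (toR2 '' S) := by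
  intro p hp q hq1 hq2 hle1 hle2
  have h1 : ((p.1, q.2) : Pt) ∈ convexHull ℝ (toR2 '' S) :=
    hull_down_vert hpos hdc p hp q.2 hq2 hle2
  have h2 : ((q.1, q.2) : Pt) ∈ convexHull ℝ (toR2 '' S) :=
    hull_down_horiz hpos hdc _ h1 q.1 hq1 hle1
  simpa using h2

end DownClosed

section UpClosed

variable {S : Set (ℕ × ℕ)}
  (huc : ∀ c ∈ S, ∀ c' : ℕ × ℕ, c.1 ≤ c'.1 → c.2 ≤ c'.2 → c' ∈ S)

include huc

lemma hull_shift_right : ∀ p ∈ convexHull ℝ (toR2 '' S),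
    p + (((1:ℝ), (0:ℝ)) : Pt) ∈ convexHull ℝ (toR2 '' S) := by
  have hsub : convexHull ℝ (toR2 '' S) ⊆
      {p : Pt | p + (((1:ℝ),(0:ℝ)) : Pt) ∈ convexHull ℝ (toR2 '' S)} := by
    apply convexHull_min
    · rintro p ⟨c, hc, rfl⟩
      have hmem : ((c.1 + 1, c.2) : ℕ × ℕ) ∈ S := huc c hc _ (Nat.le_succ _) (le_refl _)
      refine subset_convexHull ℝ _ ⟨(c.1 + 1, c.2), hmem, ?_⟩
      apply Prod.ext
      · show ((c.1 + 1 : ℕ) : ℝ) = (c.1 : ℝ) + 1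
        push_cast; ring
      · show ((c.2 : ℕ) : ℝ) = (c.2 : ℝ) + 0
        ring
    · rintro p hp q hq a b ha hb hab
      show (a • p + b • q) + (((1:ℝ),(0:ℝ)) : Pt) ∈ convexHull ℝ (toR2 '' S)
      have heq : (a • p + b • q) + (((1:ℝ),(0:ℝ)) : Pt)
          = a • (p + (((1:ℝ),(0:ℝ)) : Pt)) + b • (q + (((1:ℝ),(0:ℝ)) : Pt)) := by
        apply Prod.ext
        · show a * p.1 + b * q.1 + 1 = a * (p.1 + 1) + b * (q.1 + 1)
          linear_combination -hab
        · show a * p.2 + b * q.2 + 0 = a * (p.2 + 0) + b * (q.2 + 0)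
          ring
      rw [heq]
      exact (convex_convexHull ℝ _) hp hq ha hb hab
  intro p hp
  exact hsub hp

lemma hull_shift_up : ∀ p ∈ convexHull ℝ (toR2 '' S),
    p + (((0:ℝ), (1:ℝ)) : Pt) ∈ convexHull ℝ (toR2 '' S) := by
  have hsub : convexHull ℝ (toR2 '' S) ⊆
      {p : Pt | p + (((0:ℝ),(1:ℝ)) : Pt) ∈ convexHull ℝ (toR2 '' S)} := by
    apply convexHull_min
    · rintro p ⟨c, hc, rfl⟩
      have hmem : ((c.1, c.2 + 1) : ℕ × ℕ) ∈ S := huc c hc _ (le_refl _) (Nat.le_succ _)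
      refine subset_convexHull ℝ _ ⟨(c.1, c.2 + 1), hmem, ?_⟩
      apply Prod.ext
      · show ((c.1 : ℕ) : ℝ) = (c.1 : ℝ) + 0
        ring
      · show ((c.2 + 1 : ℕ) : ℝ) = (c.2 : ℝ) + 1
        push_cast; ring
    · rintro p hp q hq a b ha hb hab
      show (a • p + b • q) + (((0:ℝ),(1:ℝ)) : Pt) ∈ convexHull ℝ (toR2 '' S)
      have heq : (a • p + b • q) + (((0:ℝ),(1:ℝ)) : Pt)
          = a • (p + (((0:ℝ),(1:ℝ)) : Pt)) + b • (q + (((0:ℝ),(1:ℝ)) : Pt)) := by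
        apply Prod.ext
        · show a * p.1 + b * q.1 + 0 = a * (p.1 + 0) + b * (q.1 + 0)
          ring
        · show a * p.2 + b * q.2 + 1 = a * (p.2 + 1) + b * (q.2 + 1)
          linear_combination -hab
      rw [heq]
      exact (convex_convexHull ℝ _) hp hq ha hb hab
  intro p hp
  exact hsub hp

lemma hull_shift_right_nat : ∀ n : ℕ, ∀ p ∈ convexHull ℝ (toR2 '' S),
    p + (((n:ℝ), (0:ℝ)) : Pt) ∈ convexHull ℝ (toR2 '' S) := by
  intro n
  induction n with
  | zero =>
    intro p hp
    have : p + (((0:ℕ):ℝ), (0:ℝ)) = p := by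
      apply Prod.ext <;> simp
    rw [this]; exact hp
  | succ k ih =>
    intro p hp
    have h1 := hull_shift_right huc _ (ih p hp)
    have : p + (((k:ℝ),(0:ℝ)) : Pt) + (((1:ℝ),(0:ℝ)) : Pt) = p + ((((k+1:ℕ):ℝ),(0:ℝ)) : Pt) := by
      apply Prod.ext
      · show p.1 + (k:ℝ) + 1 = p.1 + ((k+1:ℕ):ℝ)
        push_cast; ring
      · show p.2 + 0 + 0 = p.2 + 0
        ring
    rw [this] at h1
    exact h1

lemma hull_shift_up_nat : ∀ n : ℕ, ∀ p ∈ convexHull ℝ (toR2 '' S),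
    p + (((0:ℝ), (n:ℝ)) : Pt) ∈ convexHull ℝ (toR2 '' S) := by
  intro n
  induction n with
  | zero =>
    intro p hp
    have : p + (((0:ℝ), ((0:ℕ):ℝ)) : Pt) = p := by
      apply Prod.ext <;> simp
    rw [this]; exact hp
  | succ k ih =>
    intro p hp
    have h1 := hull_shift_up huc _ (ih p hp)
    have : p + (((0:ℝ),(k:ℝ)) : Pt) + (((0:ℝ),(1:ℝ)) : Pt) = p + (((0:ℝ),((k+1:ℕ):ℝ)) : Pt) := by
      apply Prod.ext
      · show p.1 + 0 + 0 = p.1 + 0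
        ring
      · show p.2 + (k:ℝ) + 1 = p.2 + ((k+1:ℕ):ℝ)
        push_cast; ring
    rw [this] at h1
    exact h1

lemma hull_shift_real_right : ∀ p ∈ convexHull ℝ (toR2 '' S), ∀ t : ℝ, 0 ≤ t →
    p + ((t, (0:ℝ)) : Pt) ∈ convexHull ℝ (toR2 '' S) := by
  intro p hp t ht
  obtain ⟨n, hn⟩ := exists_nat_ge t
  rcases eq_or_lt_of_le ht with h0 | h0
  · have : p + ((t,(0:ℝ)) : Pt) = p := by
      apply Prod.ext
      · show p.1 + t = p.1
        rw [← h0]; ring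
      · show p.2 + 0 = p.2
        ring
    rw [this]; exact hp
  · have hn0 : (0:ℝ) < n := lt_of_lt_of_le h0 hn
    obtain ⟨c, hc⟩ : ∃ c : ℝ, c = t / n := ⟨_, rfl⟩
    have hc0 : 0 ≤ c := by rw [hc]; positivity
    have hc1 : c ≤ 1 := by rw [hc, div_le_one hn0]; exact hn
    have hcn : c * n = t := by rw [hc]; field_simp
    have heq : p + ((t,(0:ℝ)) : Pt) = (1-c) • p + c • (p + (((n:ℝ),(0:ℝ)) : Pt)) := by
      apply Prod.ext
      · show p.1 + t = (1-c) * p.1 + c * (p.1 + n)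
        linear_combination -hcn
      · show p.2 + 0 = (1-c) * p.2 + c * (p.2 + 0)
        ring
    rw [heq]
    exact (convex_convexHull ℝ _) hp (hull_shift_right_nat huc n p hp) (by linarith) hc0 (by ring)

lemma hull_shift_real_up : ∀ p ∈ convexHull ℝ (toR2 '' S), ∀ t : ℝ, 0 ≤ t →
    p + (((0:ℝ), t) : Pt) ∈ convexHull ℝ (toR2 '' S) := by
  intro p hp t ht
  obtain ⟨n, hn⟩ := exists_nat_ge t
  rcases eq_or_lt_of_le ht with h0 | h0
  · have : p + (((0:ℝ),t) : Pt) = p := by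
      apply Prod.ext
      · show p.1 + 0 = p.1
        ring
      · show p.2 + t = p.2
        rw [← h0]; ring
    rw [this]; exact hp
  · have hn0 : (0:ℝ) < n := lt_of_lt_of_le h0 hn
    obtain ⟨c, hc⟩ : ∃ c : ℝ, c = t / n := ⟨_, rfl⟩
    have hc0 : 0 ≤ c := by rw [hc]; positivity
    have hc1 : c ≤ 1 := by rw [hc, div_le_one hn0]; exact hn
    have hcn : c * n = t := by rw [hc]; field_simp
    have heq : p + (((0:ℝ),t) : Pt) = (1-c) • p + c • (p + (((0:ℝ),(n:ℝ)) : Pt)) := by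
      apply Prod.ext
      · show p.1 + 0 = (1-c) * p.1 + c * (p.1 + 0)
        ring
      · show p.2 + t = (1-c) * p.2 + c * (p.2 + n)
        linear_combination -hcn
    rw [heq]
    exact (convex_convexHull ℝ _) hp (hull_shift_up_nat huc n p hp) (by linarith) hc0 (by ring)

lemma hull_upclosed : ∀ p ∈ convexHull ℝ (toR2 '' S), ∀ q : Pt,
    p.1 ≤ q.1 → p.2 ≤ q.2 → q ∈ convexHull ℝ (toR2 '' S) := by
  intro p hp q h1 h2
  have ha := hull_shift_real_right huc p hp (q.1 - p.1) (by linarith)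
  have hb := hull_shift_real_up huc _ ha (q.2 - p.2) (by linarith)
  have : p + ((q.1 - p.1, (0:ℝ)) : Pt) + (((0:ℝ), q.2 - p.2) : Pt) = q := by
    apply Prod.ext
    · show p.1 + (q.1 - p.1) + 0 = q.1
      ring
    · show p.2 + 0 + (q.2 - p.2) = q.2
      ring
  rw [this] at hb
  exact hb

end UpClosed

end Stmt6

namespace Stmt6

lemma comb_of_param {b1 z' p : Pt} {t : ℝ} (h : p = b1 + t • (z' - b1)) :
    p = (1-t) • b1 + t • z' := by
  rw [h]
  apply Prod.ext
  · show b1.1 + t * (z'.1 - b1.1) = (1-t) * b1.1 + t * z'.1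
    ring
  · show b1.2 + t * (z'.2 - b1.2) = (1-t) * b1.2 + t * z'.2
    ring

lemma between_param {b1 dL x y w : Pt} {tx ty tw : ℝ}
    (hx : x = b1 + tx • dL) (hy : y = b1 + ty • dL) (hw : w = b1 + tw • dL)
    (h1 : tx ≤ tw) (h2 : tw ≤ ty) (hne : tx < ty) : w ∈ segment ℝ x y := by
  obtain ⟨θ, hθ⟩ : ∃ θ : ℝ, θ = (tw - tx)/(ty - tx) := ⟨_, rfl⟩
  have hd : (0:ℝ) < ty - tx := by linarith
  have hθ0 : 0 ≤ θ := by rw [hθ]; apply div_nonneg (by linarith) hd.le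
  have hθ1 : θ ≤ 1 := by rw [hθ, div_le_one hd]; linarith
  have hθm : θ * (ty - tx) = tw - tx := by rw [hθ]; field_simp
  refine ⟨1-θ, θ, by linarith, hθ0, by ring, ?_⟩
  rw [hx, hy, hw]
  apply Prod.ext
  · show (1-θ) * (b1.1 + tx * dL.1) + θ * (b1.1 + ty * dL.1) = b1.1 + tw * dL.1
    linear_combination dL.1 * hθm
  · show (1-θ) * (b1.2 + tx * dL.2) + θ * (b1.2 + ty * dL.2) = b1.2 + tw * dL.2
    linear_combination dL.2 * hθm

lemma line_param {b1 dL p : Pt} (hd : dL ≠ 0)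
    (h : dL.1 * (p.2 - b1.2) - dL.2 * (p.1 - b1.1) = 0) : ∃ t : ℝ, p = b1 + t • dL := by
  by_cases h1 : dL.1 = 0
  · have h2 : dL.2 ≠ 0 := fun h2 => hd (Prod.ext h1 h2)
    have hzero : dL.2 * (p.1 - b1.1) = 0 := by
      rw [h1] at h; linarith
    have hp1 : p.1 = b1.1 := by
      rcases mul_eq_zero.1 hzero with h' | h'
      · exact absurd h' h2
      · linarith
    refine ⟨(p.2 - b1.2)/dL.2, ?_⟩
    apply Prod.ext
    · show p.1 = b1.1 + (p.2 - b1.2)/dL.2 * dL.1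
      rw [h1, hp1]; ring
    · show p.2 = b1.2 + (p.2 - b1.2)/dL.2 * dL.2
      field_simp
      ring
  · refine ⟨(p.1 - b1.1)/dL.1, ?_⟩
    have hlin : (p.2 - b1.2) * dL.1 = (p.1 - b1.1) * dL.2 := by linear_combination h
    apply Prod.ext
    · show p.1 = b1.1 + (p.1 - b1.1)/dL.1 * dL.1
      field_simp
      ring
    · show p.2 = b1.2 + (p.1 - b1.1)/dL.1 * dL.2
      field_simp
      linear_combination hlin

lemma chi_combo (dL b1 p q : Pt) (s t : ℝ) (hst : s + t = 1) :
    dL.1 * ((s • p + t • q).2 - b1.2) - dL.2 * ((s • p + t • q).1 - b1.1)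
    = s * (dL.1 * (p.2 - b1.2) - dL.2 * (p.1 - b1.1))
      + t * (dL.1 * (q.2 - b1.2) - dL.2 * (q.1 - b1.1)) := by
  show dL.1 * ((s * p.2 + t * q.2) - b1.2) - dL.2 * ((s * p.1 + t * q.1) - b1.1) = _
  linear_combination (dL.1 * b1.2 - dL.2 * b1.1) * hst

end Stmt6

namespace Stmt6

set_option maxHeartbeats 4000000 in
theorem engine (Afin Bfin : Finset Pt) (U : Set Pt)
    (hUconv : Convex ℝ U)
    (hUup : ∀ u ∈ U, ∀ p : Pt, u ≤ p → p ∈ U)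
    (hBU : ∀ b ∈ Bfin, b ∈ U)
    (hAU : ∀ a ∈ Afin, a ∉ U)
    (hBA : ∀ b ∈ Bfin, b ∉ convexHull ℝ (Afin : Set Pt))
    (hdown : ∀ p ∈ convexHull ℝ (Bfin : Set Pt), ∀ v ∈ convexHull ℝ (Afin : Set Pt),
      p ≤ v → p ∈ convexHull ℝ (Afin : Set Pt)) :
    ∀ z ∈ convexHull ℝ (Bfin : Set Pt), z ∉ convexHull ℝ (Afin : Set Pt) := by
  suffices H : ∀ n : ℕ, ∀ t : Finset Pt, t.card ≤ n → t ⊆ Bfin →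
      ∀ z ∈ convexHull ℝ (t : Set Pt), z ∉ convexHull ℝ (Afin : Set Pt) by
    intro z hz
    exact H Bfin.card Bfin le_rfl (Finset.Subset.refl _) z hz
  intro n
  induction n with
  | zero =>
    intro t hcard hsub z hz
    have ht : t = ∅ := Finset.card_eq_zero.1 (Nat.le_zero.1 hcard)
    rw [ht] at hz
    simp at hz
  | succ n ih =>
    intro t hcard hsub z hzB hzA
    rcases Finset.eq_empty_or_nonempty t with rfl | ⟨b1, hb1t⟩
    · simp at hzB
    have hb1B : b1 ∈ Bfin := hsub hb1t
    have hb1U : (b1 : Pt) ∈ U := hBU _ hb1B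
    have hb1hullB : (b1 : Pt) ∈ convexHull ℝ (Bfin : Set Pt) :=
      subset_convexHull ℝ _ (Finset.mem_coe.2 hb1B)
    obtain ⟨t', ht'def⟩ : ∃ t', t' = t.erase b1 := ⟨_, rfl⟩
    have hsubt' : t' ⊆ Bfin := by
      rw [ht'def]; exact Finset.Subset.trans (Finset.erase_subset _ _) hsub
    have hinse : insert b1 t' = t := by rw [ht'def]; exact Finset.insert_erase hb1t
    have ht'card : t'.card ≤ n := by
      rw [ht'def, Finset.card_erase_of_mem hb1t]; omega
    rcases Finset.eq_empty_or_nonempty t' with ht' | ht'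
    · have htb : t = {b1} := by rw [← hinse, ht']; rfl
      rw [htb] at hzB
      simp only [Finset.coe_singleton, convexHull_singleton, mem_singleton_iff] at hzB
      exact hBA b1 hb1B (hzB ▸ hzA)
    have hins : (t : Set Pt) = insert b1 ((t' : Finset Pt) : Set Pt) := by
      rw [← hinse, Finset.coe_insert]
    rw [hins, convexHull_insert (Finset.coe_nonempty.2 ht'), mem_convexJoin] at hzB
    obtain ⟨x, hx, z', hz'B, hzseg⟩ := hzB
    rw [mem_singleton_iff] at hx
    rw [hx] at hzseg
    clear hx
    have hz'hullB : z' ∈ convexHull ℝ (Bfin : Set Pt) :=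
      convexHull_mono (Finset.coe_subset.2 hsubt') hz'B
    have hz'U : z' ∈ U :=
      convexHull_min (fun b hb => hBU b (hsubt' (Finset.mem_coe.1 hb))) hUconv hz'B
    by_cases hz'A : z' ∈ convexHull ℝ (Afin : Set Pt)
    · exact ih t' ht'card hsubt' z' hz'B hz'A
    by_cases hbz : (b1 : Pt) = z'
    · rw [← hbz, segment_same, mem_singleton_iff] at hzseg
      exact hBA b1 hb1B (hzseg ▸ hzA)
    obtain ⟨u, v, hu, hv, huv, hzc⟩ := hzseg
    by_cases hv0 : v = 0
    · have hzb1 : z = b1 := by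
        rw [← hzc, hv0]
        have hu1 : u = 1 := by linarith
        rw [hu1]
        apply Prod.ext
        · show 1 * b1.1 + 0 * z'.1 = b1.1
          ring
        · show 1 * b1.2 + 0 * z'.2 = b1.2
          ring
      exact hBA b1 hb1B (hzb1 ▸ hzA)
    by_cases hu0 : u = 0
    · have hzz' : z = z' := by
        rw [← hzc, hu0]
        have hv1 : v = 1 := by linarith
        rw [hv1]
        apply Prod.ext
        · show 0 * b1.1 + 1 * z'.1 = z'.1
          ring
        · show 0 * b1.2 + 1 * z'.2 = z'.2
          ring
      exact hz'A (hzz' ▸ hzA)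
    have hv0' : 0 < v := lt_of_le_of_ne hv (Ne.symm hv0)
    have hu0' : 0 < u := lt_of_le_of_ne hu (Ne.symm hu0)
    have hv1 : v < 1 := by linarith
    have hdL : z' - b1 ≠ 0 := sub_ne_zero.2 (Ne.symm hbz)
    have hzparam : z = b1 + v • (z' - b1) := by
      rw [← hzc]
      apply Prod.ext
      · show u * b1.1 + v * z'.1 = b1.1 + v * (z'.1 - b1.1)
        linear_combination b1.1 * huv
      · show u * b1.2 + v * z'.2 = b1.2 + v * (z'.2 - b1.2)
        linear_combination b1.2 * huv
    have hz'param : z' = b1 + (1:ℝ) • (z' - b1) := by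
      apply Prod.ext
      · show z'.1 = b1.1 + 1 * (z'.1 - b1.1)
        ring
      · show z'.2 = b1.2 + 1 * (z'.2 - b1.2)
        ring
    have hb1param : (b1 : Pt) = b1 + (0:ℝ) • (z' - b1) := by
      apply Prod.ext
      · show b1.1 = b1.1 + 0 * (z'.1 - b1.1)
        ring
      · show b1.2 = b1.2 + 0 * (z'.2 - b1.2)
        ring
    have hsegU : segment ℝ b1 z' ⊆ U := hUconv.segment_subset hb1U hz'U
    have hkillt : ∀ p : Pt, p ∈ convexHull ℝ (Afin : Set Pt) → ∀ tp : ℝ,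
        p = b1 + tp • (z' - b1) → 0 < tp ∧ tp < 1 := by
      intro p hpKH tp hp
      constructor
      · by_contra hle
        push_neg at hle
        have hmem : (b1 : Pt) ∈ segment ℝ p z :=
          between_param hp hzparam hb1param hle (le_of_lt hv0') (lt_of_le_of_lt hle hv0')
        exact hBA b1 hb1B ((convex_convexHull ℝ _).segment_subset hpKH hzA hmem)
      · by_contra hle
        push_neg at hle
        have hmem : z' ∈ segment ℝ z p :=
          between_param hzparam hp hz'param (le_of_lt hv1) hle (lt_of_lt_of_le hv1 hle)
        exact hz'A ((convex_convexHull ℝ _).segment_subset hzA hpKH hmem)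
    by_cases hex : ∃ a ∈ Afin, (z'-b1).1 * ((a:Pt).2 - b1.2) - (z'-b1).2 * ((a:Pt).1 - b1.1) = 0
    · obtain ⟨a0, ha0A, ha0χ⟩ := hex
      obtain ⟨t0, ht0⟩ := line_param hdL ha0χ
      have ha0KH : (a0:Pt) ∈ convexHull ℝ (Afin : Set Pt) :=
        subset_convexHull ℝ _ (Finset.mem_coe.2 ha0A)
      obtain ⟨ht00, ht01⟩ := hkillt a0 ha0KH t0 ht0
      have hmem : (a0 : Pt) ∈ segment ℝ b1 z' :=
        between_param hb1param hz'param ht0 (le_of_lt ht00) (le_of_lt ht01) one_pos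
      exact hAU a0 ha0A (hsegU hmem)
    push_neg at hex
    have hlm : IsLinearMap ℝ (fun p : Pt => (z'-b1).1 * p.2 - (z'-b1).2 * p.1) := by
      constructor
      · intro p q
        show (z'-b1).1 * (p.2 + q.2) - (z'-b1).2 * (p.1 + q.1) = _
        ring
      · intro c p
        show (z'-b1).1 * (c * p.2) - (z'-b1).2 * (c * p.1) = c * _
        ring
    have hχz : (z'-b1).1 * (z.2 - b1.2) - (z'-b1).2 * (z.1 - b1.1) = 0 := by
      rw [hzparam]
      show (z'-b1).1 * (b1.2 + v * (z'.2-b1.2) - b1.2) - (z'-b1).2 * (b1.1 + v * (z'.1-b1.1) - b1.1) = 0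
      show (z'.1-b1.1) * (b1.2 + v * (z'.2-b1.2) - b1.2) - (z'.2-b1.2) * (b1.1 + v * (z'.1-b1.1) - b1.1) = 0
      ring
    by_cases hpos : ∀ a ∈ Afin, 0 < (z'-b1).1 * ((a:Pt).2 - b1.2) - (z'-b1).2 * ((a:Pt).1 - b1.1)
    · have hsubχ : convexHull ℝ (Afin : Set Pt) ⊆
          {p : Pt | (z'-b1).1 * b1.2 - (z'-b1).2 * b1.1 < (z'-b1).1 * p.2 - (z'-b1).2 * p.1} := by
        apply convexHull_min _ (convex_halfSpace_gt hlm _)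
        intro a haA
        have h := hpos a (Finset.mem_coe.1 haA)
        show (z'-b1).1 * b1.2 - (z'-b1).2 * b1.1 < (z'-b1).1 * a.2 - (z'-b1).2 * a.1
        nlinarith [h]
      have h1 := hsubχ hzA
      simp only [mem_setOf_eq] at h1
      nlinarith [hχz, h1]
    by_cases hneg : ∀ a ∈ Afin, (z'-b1).1 * ((a:Pt).2 - b1.2) - (z'-b1).2 * ((a:Pt).1 - b1.1) < 0
    · have hsubχ : convexHull ℝ (Afin : Set Pt) ⊆
          {p : Pt | (z'-b1).1 * p.2 - (z'-b1).2 * p.1 < (z'-b1).1 * b1.2 - (z'-b1).2 * b1.1} := by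
        apply convexHull_min _ (convex_halfSpace_lt hlm _)
        intro a haA
        have h := hneg a (Finset.mem_coe.1 haA)
        show (z'-b1).1 * a.2 - (z'-b1).2 * a.1 < (z'-b1).1 * b1.2 - (z'-b1).2 * b1.1
        nlinarith [h]
      have h1 := hsubχ hzA
      simp only [mem_setOf_eq] at h1
      nlinarith [hχz, h1]
    push_neg at hpos hneg
    obtain ⟨am, hamA, ham⟩ := hpos
    obtain ⟨ap, hapA, hap⟩ := hneg
    have hamneg : (z'-b1).1 * ((am:Pt).2 - b1.2) - (z'-b1).2 * ((am:Pt).1 - b1.1) < 0 :=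
      lt_of_le_of_ne ham (hex am hamA)
    have happos : 0 < (z'-b1).1 * ((ap:Pt).2 - b1.2) - (z'-b1).2 * ((ap:Pt).1 - b1.1) :=
      lt_of_le_of_ne hap (Ne.symm (hex ap hapA))
    have hapKH : (ap:Pt) ∈ convexHull ℝ (Afin : Set Pt) :=
      subset_convexHull ℝ _ (Finset.mem_coe.2 hapA)
    have hamKH : (am:Pt) ∈ convexHull ℝ (Afin : Set Pt) :=
      subset_convexHull ℝ _ (Finset.mem_coe.2 hamA)
    obtain ⟨θ, hθdef⟩ : ∃ θ : ℝ, θ =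
        ((z'-b1).1 * ((ap:Pt).2 - b1.2) - (z'-b1).2 * ((ap:Pt).1 - b1.1)) /
        (((z'-b1).1 * ((ap:Pt).2 - b1.2) - (z'-b1).2 * ((ap:Pt).1 - b1.1)) -
         ((z'-b1).1 * ((am:Pt).2 - b1.2) - (z'-b1).2 * ((am:Pt).1 - b1.1))) := ⟨_, rfl⟩
    have hθd : 0 < ((z'-b1).1 * ((ap:Pt).2 - b1.2) - (z'-b1).2 * ((ap:Pt).1 - b1.1)) -
         ((z'-b1).1 * ((am:Pt).2 - b1.2) - (z'-b1).2 * ((am:Pt).1 - b1.1)) := by linarith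
    have hθ0 : 0 < θ := by rw [hθdef]; exact div_pos happos hθd
    have hθ1 : θ < 1 := by rw [hθdef, div_lt_one hθd]; linarith
    have hθm : θ * (((z'-b1).1 * ((ap:Pt).2 - b1.2) - (z'-b1).2 * ((ap:Pt).1 - b1.1)) -
         ((z'-b1).1 * ((am:Pt).2 - b1.2) - (z'-b1).2 * ((am:Pt).1 - b1.1)))
         = (z'-b1).1 * ((ap:Pt).2 - b1.2) - (z'-b1).2 * ((ap:Pt).1 - b1.1) := by
      rw [hθdef]; exact div_mul_cancel₀ _ (ne_of_gt hθd)
    obtain ⟨R, hR⟩ : ∃ R : Pt, R = (1-θ) • (ap:Pt) + θ • (am:Pt) := ⟨_, rfl⟩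
    have hRKH : R ∈ convexHull ℝ (Afin : Set Pt) := by
      rw [hR]
      exact (convex_convexHull ℝ _) hapKH hamKH (by linarith) (le_of_lt hθ0) (by ring)
    have hχR : (z'-b1).1 * (R.2 - b1.2) - (z'-b1).2 * (R.1 - b1.1) = 0 := by
      rw [hR, chi_combo (z'-b1) b1 ap am (1-θ) θ (by ring)]
      linear_combination -hθm
    obtain ⟨tR, htR⟩ := line_param hdL hχR
    obtain ⟨htR0, htR1⟩ := hkillt R hRKH tR htR
    have hRseg : R ∈ segment ℝ b1 z' :=
      between_param hb1param hz'param htR (le_of_lt htR0) (le_of_lt htR1) one_pos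
    have hRU : R ∈ U := hsegU hRseg
    have hRcombB : R = (1-tR) • (b1:Pt) + tR • z' := comb_of_param htR
    have h1mθ0 : 0 < 1 - θ := by linarith
    have h1mθ1 : 1 - θ < 1 := by linarith
    have h1mtR0 : 0 < 1 - tR := by linarith
    have h1mtR1 : 1 - tR < 1 := by linarith
    have hR1 : R.1 = (1-θ) * (ap:Pt).1 + θ * (am:Pt).1 := by rw [hR]; rfl
    have hR2 : R.2 = (1-θ) * (ap:Pt).2 + θ * (am:Pt).2 := by rw [hR]; rfl
    have hRb1 : R.1 = b1.1 + tR * (z'.1 - b1.1) := by rw [htR]; rfl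
    have hRb2 : R.2 = b1.2 + tR * (z'.2 - b1.2) := by rw [htR]; rfl
    -- not-≤ facts
    have hnle1 : ¬ ((ap:Pt) ≤ (am:Pt)) := by
      intro hle
      refine hAU am hamA (hUup R hRU am ?_)
      refine Prod.le_def.2 ⟨?_, ?_⟩
      · rw [hR1]; nlinarith [(Prod.le_def.1 hle).1]
      · rw [hR2]; nlinarith [(Prod.le_def.1 hle).2]
    have hnle2 : ¬ ((am:Pt) ≤ (ap:Pt)) := by
      clear hnle1
      intro hle
      refine hAU ap hapA (hUup R hRU ap ?_)
      refine Prod.le_def.2 ⟨?_, ?_⟩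
      · rw [hR1]; nlinarith [(Prod.le_def.1 hle).1]
      · rw [hR2]; nlinarith [(Prod.le_def.1 hle).2]
    have hnleB1 : ¬ ((b1:Pt) ≤ z') := by
      clear hnle1 hnle2
      intro hle
      refine hBA b1 hb1B (hdown b1 hb1hullB R hRKH ?_)
      refine Prod.le_def.2 ⟨?_, ?_⟩
      · rw [hRb1]; nlinarith [(Prod.le_def.1 hle).1]
      · rw [hRb2]; nlinarith [(Prod.le_def.1 hle).2]
    have hnleB2 : ¬ (z' ≤ (b1:Pt)) := by
      clear hnle1 hnle2 hnleB1
      intro hle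
      refine hz'A (hdown z' hz'hullB R hRKH ?_)
      refine Prod.le_def.2 ⟨?_, ?_⟩
      · rw [hRb1]; nlinarith [(Prod.le_def.1 hle).1]
      · rw [hRb2]; nlinarith [(Prod.le_def.1 hle).2]
    have hmxA : ((ap:Pt).1 < (am:Pt).1 ∧ (am:Pt).2 < (ap:Pt).2)
        ∨ ((am:Pt).1 < (ap:Pt).1 ∧ (ap:Pt).2 < (am:Pt).2) := by
      rcases le_or_gt (ap:Pt).1 (am:Pt).1 with h1 | h1
      · have h2 : (am:Pt).2 < (ap:Pt).2 := by
          by_contra h2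
          push_neg at h2
          exact hnle1 (Prod.le_def.2 ⟨h1, h2⟩)
        have h1' : (ap:Pt).1 < (am:Pt).1 := by
          rcases lt_or_eq_of_le h1 with h | h
          · exact h
          · exact absurd (Prod.le_def.2 ⟨le_of_eq h.symm, le_of_lt h2⟩) hnle2
        exact Or.inl ⟨h1', h2⟩
      · have h2 : (ap:Pt).2 < (am:Pt).2 := by
          by_contra h2
          push_neg at h2
          exact hnle2 (Prod.le_def.2 ⟨le_of_lt h1, h2⟩)
        exact Or.inr ⟨h1, h2⟩
    have hmxB : ((b1:Pt).1 < z'.1 ∧ z'.2 < (b1:Pt).2)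
        ∨ (z'.1 < (b1:Pt).1 ∧ (b1:Pt).2 < z'.2) := by
      rcases le_or_gt (b1:Pt).1 z'.1 with h1 | h1
      · have h2 : z'.2 < (b1:Pt).2 := by
          by_contra h2
          push_neg at h2
          exact hnleB1 (Prod.le_def.2 ⟨h1, h2⟩)
        have h1' : (b1:Pt).1 < z'.1 := by
          rcases lt_or_eq_of_le h1 with h | h
          · exact h
          · exact absurd (Prod.le_def.2 ⟨le_of_eq h.symm, le_of_lt h2⟩) hnleB2
        exact Or.inl ⟨h1', h2⟩
      · have h2 : (b1:Pt).2 < z'.2 := by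
          by_contra h2
          push_neg at h2
          exact hnleB2 (Prod.le_def.2 ⟨le_of_lt h1, h2⟩)
        exact Or.inr ⟨h1, h2⟩
    have hDKA : ∀ w ∈ segment ℝ b1 z', ∀ a ∈ Afin, ¬ (w ≤ (a:Pt)) :=
      fun w hw a haA hle => hAU a haA (hUup w (hsegU hw) a hle)
    have hDKB : ∀ v ∈ convexHull ℝ (Afin : Set Pt), ¬ ((b1:Pt) ≤ v) ∧ ¬ (z' ≤ v) :=
      fun v hv => ⟨fun hle => hBA b1 hb1B (hdown b1 hb1hullB v hv hle),
        fun hle => hz'A (hdown z' hz'hullB v hv hle)⟩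
    have hsegKH1 : segment ℝ (ap:Pt) (am:Pt) ⊆ convexHull ℝ (Afin : Set Pt) :=
      (convex_convexHull ℝ _).segment_subset hapKH hamKH
    have hsegKH2 : segment ℝ (am:Pt) (ap:Pt) ⊆ convexHull ℝ (Afin : Set Pt) :=
      (convex_convexHull ℝ _).segment_subset hamKH hapKH
    have hRcombA2 : R = (1-(1-θ)) • (am:Pt) + (1-θ) • (ap:Pt) := by
      rw [hR]
      apply Prod.ext
      · show (1-θ) * (ap:Pt).1 + θ * (am:Pt).1 = (1-(1-θ)) * (am:Pt).1 + (1-θ) * (ap:Pt).1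
        ring
      · show (1-θ) * (ap:Pt).2 + θ * (am:Pt).2 = (1-(1-θ)) * (am:Pt).2 + (1-θ) * (ap:Pt).2
        ring
    have hRcombB2 : R = (1-(1-tR)) • z' + (1-tR) • (b1:Pt) := by
      rw [hRcombB]
      apply Prod.ext
      · show (1-tR) * (b1:Pt).1 + tR * z'.1 = (1-(1-tR)) * z'.1 + (1-tR) * (b1:Pt).1
        ring
      · show (1-tR) * (b1:Pt).2 + tR * z'.2 = (1-(1-tR)) * z'.2 + (1-tR) * (b1:Pt).2
        ring
    have hsegsymm : segment ℝ z' (b1:Pt) = segment ℝ (b1:Pt) z' := segment_symm ℝ z' b1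
    rcases hmxA with ⟨haa1, haa2⟩ | ⟨haa1, haa2⟩ <;> rcases hmxB with ⟨hbb1, hbb2⟩ | ⟨hbb1, hbb2⟩
    · exact coreA ap am b1 z' R θ tR hθ0 hθ1 htR0 htR1 hR hRcombB haa1 haa2 hbb1 hbb2
        (fun w hw => ⟨hDKA w hw ap hapA, hDKA w hw am hamA⟩)
        (fun v hv => hDKB v (hsegKH1 hv))
    · exact coreA ap am z' b1 R θ (1-tR) hθ0 hθ1 h1mtR0 h1mtR1 hR hRcombB2 haa1 haa2 hbb1 hbb2
        (fun w hw => ⟨hDKA w (hsegsymm ▸ hw) ap hapA, hDKA w (hsegsymm ▸ hw) am hamA⟩)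
        (fun v hv => ⟨(hDKB v (hsegKH1 hv)).2, (hDKB v (hsegKH1 hv)).1⟩)
    · exact coreA am ap b1 z' R (1-θ) tR h1mθ0 h1mθ1 htR0 htR1 hRcombA2 hRcombB haa1 haa2 hbb1 hbb2
        (fun w hw => ⟨hDKA w hw am hamA, hDKA w hw ap hapA⟩)
        (fun v hv => hDKB v (hsegKH2 hv))
    · exact coreA am ap z' b1 R (1-θ) (1-tR) h1mθ0 h1mθ1 h1mtR0 h1mtR1
        hRcombA2 hRcombB2 haa1 haa2 hbb1 hbb2
        (fun w hw => ⟨hDKA w (hsegsymm ▸ hw) am hamA, hDKA w (hsegsymm ▸ hw) ap hapA⟩)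
        (fun v hv => ⟨(hDKB v (hsegKH2 hv)).2, (hDKB v (hsegKH2 hv)).1⟩)

end Stmt6

namespace Stmt6

lemma empty_triangular : IsTriangularSet (∅ : Set (ℕ × ℕ)) := by
  refine ⟨1/3, 1/3, by norm_num, by norm_num, ?_⟩
  ext c
  simp only [mem_empty_iff_false, mem_setOf_eq, false_iff]
  rintro ⟨h1, h2, h3⟩
  have hc1 : (1:ℝ) ≤ (c.1 : ℝ) := by exact_mod_cast h1
  have hc2 : (1:ℝ) ≤ (c.2 : ℝ) := by exact_mod_cast h2
  have : (c.1:ℝ)/(1/3) + (c.2:ℝ)/(1/3) = 3*(c.1:ℝ) + 3*(c.2:ℝ) := by ring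
  rw [this] at h3
  linarith

section TriBasics

variable {S : Set (ℕ × ℕ)} {r s : ℝ} (hr : 0 < r) (hs : 0 < s)
  (hEq : S = {c : ℕ × ℕ | 1 ≤ c.1 ∧ 1 ≤ c.2 ∧ (c.1 : ℝ) / r + (c.2 : ℝ) / s ≤ 1})

include hr hs hEq

lemma tri_pos_mem {c : ℕ × ℕ} (hc : c ∈ S) : c ∈ posQuad := by
  rw [hEq] at hc
  exact ⟨hc.1, hc.2.1⟩

lemma tri_lf_le {c : ℕ × ℕ} (hc : c ∈ S) : (c.1 : ℝ)/r + (c.2 : ℝ)/s ≤ 1 := by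
  rw [hEq] at hc
  exact hc.2.2

lemma tri_mem_of {c : ℕ × ℕ} (h1 : 1 ≤ c.1) (h2 : 1 ≤ c.2)
    (h3 : (c.1 : ℝ)/r + (c.2 : ℝ)/s ≤ 1) : c ∈ S := by
  rw [hEq]; exact ⟨h1, h2, h3⟩

lemma tri_not_mem {c : ℕ × ℕ} (hc : c ∈ posQuad) (hns : c ∉ S) :
    1 < (c.1 : ℝ)/r + (c.2 : ℝ)/s := by
  by_contra h
  push_neg at h
  exact hns (tri_mem_of hr hs hEq hc.1 hc.2 h)

lemma tri_down {c c' : ℕ × ℕ} (hc : c ∈ S) (hc' : c' ∈ posQuad)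
    (h1 : c'.1 ≤ c.1) (h2 : c'.2 ≤ c.2) : c' ∈ S := by
  refine tri_mem_of hr hs hEq hc'.1 hc'.2 ?_
  have hle := tri_lf_le hr hs hEq hc
  have g1 : (c'.1:ℝ) ≤ (c.1:ℝ) := by exact_mod_cast h1
  have g2 : (c'.2:ℝ) ≤ (c.2:ℝ) := by exact_mod_cast h2
  have d1 : (c'.1:ℝ)/r ≤ (c.1:ℝ)/r := by apply div_le_div_of_nonneg_right g1 hr.le
  have d2 : (c'.2:ℝ)/s ≤ (c.2:ℝ)/s := by apply div_le_div_of_nonneg_right g2 hs.le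
  linarith

lemma tri_bound1 {c : ℕ × ℕ} (hc : c ∈ S) : (c.1 : ℝ) ≤ r := by
  have hle := tri_lf_le hr hs hEq hc
  have h2 : (0:ℝ) ≤ (c.2:ℝ)/s := by positivity
  have h1 : (c.1:ℝ)/r ≤ 1 := by linarith
  rw [div_le_one hr] at h1
  linarith

lemma tri_bound2 {c : ℕ × ℕ} (hc : c ∈ S) : (c.2 : ℝ) ≤ s := by
  have hle := tri_lf_le hr hs hEq hc
  have h2 : (0:ℝ) ≤ (c.1:ℝ)/r := by positivity
  have h1 : (c.2:ℝ)/s ≤ 1 := by linarith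
  rw [div_le_one hs] at h1
  linarith

end TriBasics

end Stmt6

namespace Stmt6

set_option maxHeartbeats 4000000 in
theorem join_triangular (S1 S2 : Set (ℕ × ℕ)) (r1 s1 r2 s2 : ℝ)
    (hr1 : 0 < r1) (hs1 : 0 < s1) (hr2 : 0 < r2) (hs2 : 0 < s2)
    (hEq1 : S1 = {c : ℕ × ℕ | 1 ≤ c.1 ∧ 1 ≤ c.2 ∧ (c.1 : ℝ) / r1 + (c.2 : ℝ) / s1 ≤ 1})
    (hEq2 : S2 = {c : ℕ × ℕ | 1 ≤ c.1 ∧ 1 ≤ c.2 ∧ (c.1 : ℝ) / r2 + (c.2 : ℝ) / s2 ≤ 1}) :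
    IsTriangularSet {c : ℕ × ℕ | c ∈ posQuad ∧ toR2 c ∈ convexHull ℝ (toR2 '' (S1 ∪ S2))} := by
  classical
  obtain ⟨A, hA⟩ : ∃ A, A = S1 ∪ S2 := ⟨_, rfl⟩
  obtain ⟨Jset, hJ⟩ : ∃ J, J = {c : ℕ × ℕ | c ∈ posQuad ∧ toR2 c ∈ convexHull ℝ (toR2 '' (S1 ∪ S2))} :=
    ⟨_, rfl⟩
  rw [← hJ]
  have hApos : A ⊆ posQuad := by
    rw [hA]
    rintro c (hc | hc)
    · exact tri_pos_mem hr1 hs1 hEq1 hc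
    · exact tri_pos_mem hr2 hs2 hEq2 hc
  have hAdown : ∀ c ∈ A, ∀ c' : ℕ × ℕ, c' ∈ posQuad → c'.1 ≤ c.1 → c'.2 ≤ c.2 → c' ∈ A := by
    rw [hA]
    rintro c (hc | hc) c' hc' h1 h2
    · exact Or.inl (tri_down hr1 hs1 hEq1 hc hc' h1 h2)
    · exact Or.inr (tri_down hr2 hs2 hEq2 hc hc' h1 h2)
  have hAJ : A ⊆ Jset := by
    intro c hc
    rw [hJ]
    exact ⟨hApos hc, subset_convexHull ℝ _ ⟨c, by rw [← hA]; exact hc, rfl⟩⟩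
  by_cases h11 : (1,1) ∈ A
  case neg =>
    -- A is empty, Jset is empty
    have hAe : A = ∅ := by
      ext c
      simp only [mem_empty_iff_false, iff_false]
      intro hc
      exact h11 (hAdown c hc (1,1) ⟨le_refl 1, le_refl 1⟩ (hApos hc).1 (hApos hc).2)
    have hJe : Jset = ∅ := by
      rw [hJ]
      ext c
      simp only [mem_empty_iff_false, iff_false, mem_setOf_eq, not_and]
      intro _
      rw [← hA, hAe]
      simp
    rw [hJe]
    exact empty_triangular
  case pos =>
  -- main case
  have hcoeA : toR2 '' (S1 ∪ S2) = toR2 '' A := by rw [hA]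
  have hJmem : ∀ c : ℕ × ℕ, c ∈ Jset ↔ c ∈ posQuad ∧ toR2 c ∈ convexHull ℝ (toR2 '' A) := by
    intro c
    rw [hJ, ← hcoeA]
    rfl
  obtain ⟨R0, hR0⟩ : ∃ R0, R0 = max r1 r2 := ⟨_, rfl⟩
  obtain ⟨S0, hS0⟩ : ∃ S0, S0 = max s1 s2 := ⟨_, rfl⟩
  have hR0p : 0 < R0 := by rw [hR0]; exact lt_max_of_lt_left hr1
  have hS0p : 0 < S0 := by rw [hS0]; exact lt_max_of_lt_left hs1
  have hhullb1 : convexHull ℝ (toR2 '' A) ⊆ {p : Pt | p.1 ≤ R0} := by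
    apply convexHull_min _ (convex_halfSpace_le isLinearMap_fst R0)
    rintro p ⟨c, hc, rfl⟩
    rw [hA] at hc
    rcases hc with hc | hc
    · show (c.1:ℝ) ≤ R0
      rw [hR0]
      exact le_trans (tri_bound1 hr1 hs1 hEq1 hc) (le_max_left _ _)
    · show (c.1:ℝ) ≤ R0
      rw [hR0]
      exact le_trans (tri_bound1 hr2 hs2 hEq2 hc) (le_max_right _ _)
  have hhullb2 : convexHull ℝ (toR2 '' A) ⊆ {p : Pt | p.2 ≤ S0} := by
    apply convexHull_min _ (convex_halfSpace_le isLinearMap_snd S0)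
    rintro p ⟨c, hc, rfl⟩
    rw [hA] at hc
    rcases hc with hc | hc
    · show (c.2:ℝ) ≤ S0
      rw [hS0]
      exact le_trans (tri_bound2 hr1 hs1 hEq1 hc) (le_max_left _ _)
    · show (c.2:ℝ) ≤ S0
      rw [hS0]
      exact le_trans (tri_bound2 hr2 hs2 hEq2 hc) (le_max_right _ _)
  obtain ⟨X0, hX0⟩ : ∃ X0 : ℕ, X0 = ⌈R0⌉₊ := ⟨_, rfl⟩
  obtain ⟨Y0, hY0⟩ : ∃ Y0 : ℕ, Y0 = ⌈S0⌉₊ := ⟨_, rfl⟩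
  have hX01 : 1 ≤ X0 := by rw [hX0]; exact Nat.one_le_ceil_iff.2 hR0p
  have hY01 : 1 ≤ Y0 := by rw [hY0]; exact Nat.one_le_ceil_iff.2 hS0p
  have hJb1 : ∀ c ∈ Jset, c.1 ≤ X0 := by
    intro c hc
    have h := hhullb1 ((hJmem c).1 hc).2
    have h2 : (c.1:ℝ) ≤ (X0:ℝ) := by
      refine le_trans h ?_
      rw [hX0]
      exact Nat.le_ceil R0
    exact_mod_cast h2
  have hJb2 : ∀ c ∈ Jset, c.2 ≤ Y0 := by
    intro c hc
    have h := hhullb2 ((hJmem c).1 hc).2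
    have h2 : (c.2:ℝ) ≤ (Y0:ℝ) := by
      refine le_trans h ?_
      rw [hY0]
      exact Nat.le_ceil S0
    exact_mod_cast h2
  have hJdown : ∀ c ∈ Jset, ∀ c' : ℕ × ℕ, c' ∈ posQuad → c'.1 ≤ c.1 → c'.2 ≤ c.2 → c' ∈ Jset := by
    intro c hc c' hc' h1 h2
    obtain ⟨hcp, hch⟩ := (hJmem c).1 hc
    refine (hJmem c').2 ⟨hc', ?_⟩
    refine hull_downclosed hApos hAdown _ hch (toR2 c') ?_ ?_ ?_ ?_
    · show (1:ℝ) ≤ (c'.1:ℝ); exact_mod_cast hc'.1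
    · show (1:ℝ) ≤ (c'.2:ℝ); exact_mod_cast hc'.2
    · show (c'.1:ℝ) ≤ (c.1:ℝ); exact_mod_cast h1
    · show (c'.2:ℝ) ≤ (c.2:ℝ); exact_mod_cast h2
  -- the wedge membership of complement points
  have hBW : ∀ c : ℕ × ℕ, c ∈ posQuad → c ∉ Jset →
      1 < (toR2 c).1/r1 + (toR2 c).2/s1 ∧ 1 < (toR2 c).1/r2 + (toR2 c).2/s2 := by
    intro c hc hnc
    constructor
    · exact tri_not_mem hr1 hs1 hEq1 hc (fun h => hnc (hAJ (by rw [hA]; exact Or.inl h)))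
    · exact tri_not_mem hr2 hs2 hEq2 hc (fun h => hnc (hAJ (by rw [hA]; exact Or.inr h)))
  -- column minima
  have hcm : ∀ x : ℕ, ∃ y, 1 ≤ y ∧ (x, y) ∉ Jset := by
    intro x
    refine ⟨Y0 + 1, by omega, fun hmem => ?_⟩
    have h2 : Y0 + 1 ≤ Y0 := hJb2 _ hmem
    omega
  obtain ⟨colMin, hcolMin⟩ : ∃ f : ℕ → ℕ, ∀ x, (1 ≤ f x ∧ (x, f x) ∉ Jset) ∧
      ∀ y < f x, ¬(1 ≤ y ∧ (x, y) ∉ Jset) :=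
    ⟨fun x => Nat.find (hcm x), fun x => ⟨Nat.find_spec (hcm x), fun y hy => Nat.find_min (hcm x) hy⟩⟩
  obtain ⟨SBL, hSBL⟩ : ∃ SBL : Finset (ℕ × ℕ),
      SBL = (Finset.Icc 1 (X0+1)).image (fun x => (x, colMin x)) := ⟨_, rfl⟩
  have hSBLmem : ∀ p ∈ SBL, 1 ≤ p.1 ∧ 1 ≤ p.2 ∧ p ∉ Jset := by
    intro p hp
    rw [hSBL, Finset.mem_image] at hp
    obtain ⟨x, hx, rfl⟩ := hp
    rw [Finset.mem_Icc] at hx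
    exact ⟨hx.1, (hcolMin x).1.1, (hcolMin x).1.2⟩
  have hcolfar : colMin (X0+1) = 1 := by
    have h1 := (hcolMin (X0+1)).1.1
    by_contra hne
    have hgt : 1 < colMin (X0+1) := by omega
    refine (hcolMin (X0+1)).2 1 hgt ⟨le_refl 1, fun hmem => ?_⟩
    have h2 : X0 + 1 ≤ X0 := hJb1 _ hmem
    omega
  have hdom : ∀ c : ℕ × ℕ, c ∈ posQuad → c ∉ Jset → ∃ p ∈ SBL, p.1 ≤ c.1 ∧ p.2 ≤ c.2 := by
    intro c hc hnc
    by_cases hcx : c.1 ≤ X0 + 1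
    · refine ⟨(c.1, colMin c.1), ?_, le_refl _, ?_⟩
      · rw [hSBL, Finset.mem_image]
        exact ⟨c.1, Finset.mem_Icc.2 ⟨hc.1, hcx⟩, rfl⟩
      · show colMin c.1 ≤ c.2
        by_contra hlt
        push_neg at hlt
        exact (hcolMin c.1).2 c.2 hlt ⟨hc.2, by rwa [Prod.mk.eta]⟩
    · push_neg at hcx
      refine ⟨(X0+1, colMin (X0+1)), ?_, ?_, ?_⟩
      · rw [hSBL, Finset.mem_image]
        exact ⟨X0+1, Finset.mem_Icc.2 ⟨by omega, le_refl _⟩, rfl⟩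
      · show X0+1 ≤ c.1
        omega
      · show colMin (X0+1) ≤ c.2
        rw [hcolfar]
        exact hc.2
  -- finiteness
  have hJfin : Jset.Finite := by
    apply Set.Finite.subset (Set.finite_Icc ((1,1) : ℕ × ℕ) (X0, Y0))
    intro c hc
    rw [Set.mem_Icc]
    exact ⟨⟨((hJmem c).1 hc).1.1, ((hJmem c).1 hc).1.2⟩, ⟨hJb1 c hc, hJb2 c hc⟩⟩
  have hAfinite : A.Finite := hJfin.subset hAJ
  obtain ⟨AfinL, hAfinL⟩ : ∃ t : Finset (ℕ × ℕ), (t : Set (ℕ × ℕ)) = A :=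
    ⟨hAfinite.toFinset, hAfinite.coe_toFinset⟩
  obtain ⟨Afin, hAfin⟩ : ∃ t : Finset Pt, t = AfinL.image toR2 := ⟨_, rfl⟩
  have hAcoe : (Afin : Set Pt) = toR2 '' A := by rw [hAfin, Finset.coe_image, hAfinL]
  obtain ⟨SB, hSB⟩ : ∃ t : Finset Pt, t = SBL.image toR2 := ⟨_, rfl⟩
  obtain ⟨U, hU⟩ : ∃ U : Set Pt, U = {p : Pt | 1 < p.1/r1 + p.2/s1} ∩ {p : Pt | 1 < p.1/r2 + p.2/s2} :=
    ⟨_, rfl⟩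
  have hUconv : Convex ℝ U := by
    rw [hU]
    exact (convex_halfSpace_gt (isLinearMap_lf r1 s1) 1).inter
      (convex_halfSpace_gt (isLinearMap_lf r2 s2) 1)
  have hUup : ∀ u ∈ U, ∀ p : Pt, u ≤ p → p ∈ U := by
    intro w hw p hle
    rw [hU] at hw ⊢
    obtain ⟨hle1, hle2⟩ := Prod.le_def.1 hle
    have d1 : w.1/r1 ≤ p.1/r1 := div_le_div_of_nonneg_right hle1 hr1.le
    have d2 : w.2/s1 ≤ p.2/s1 := div_le_div_of_nonneg_right hle2 hs1.le
    have d3 : w.1/r2 ≤ p.1/r2 := div_le_div_of_nonneg_right hle1 hr2.le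
    have d4 : w.2/s2 ≤ p.2/s2 := div_le_div_of_nonneg_right hle2 hs2.le
    obtain ⟨hw1, hw2⟩ := hw
    constructor
    · show 1 < p.1/r1 + p.2/s1
      simp only [mem_setOf_eq] at hw1
      linarith
    · show 1 < p.1/r2 + p.2/s2
      simp only [mem_setOf_eq] at hw2
      linarith
  have hBU : ∀ b ∈ SB, b ∈ U := by
    intro b hb
    rw [hSB, Finset.mem_image] at hb
    obtain ⟨p, hp, rfl⟩ := hb
    obtain ⟨hp1, hp2, hpn⟩ := hSBLmem p hp
    have hw := hBW p ⟨hp1, hp2⟩ hpn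
    rw [hU]
    exact ⟨hw.1, hw.2⟩
  have hAU : ∀ a ∈ Afin, a ∉ U := by
    intro a ha hau
    rw [hAfin, Finset.mem_image] at ha
    obtain ⟨c, hcL, rfl⟩ := ha
    have hcA : c ∈ A := by rw [← hAfinL]; exact Finset.mem_coe.2 hcL
    rw [hU] at hau
    rw [hA] at hcA
    rcases hcA with hc | hc
    · have hle := tri_lf_le hr1 hs1 hEq1 hc
      have h2 := hau.1
      simp only [mem_setOf_eq] at h2
      have : (toR2 c).1 = (c.1:ℝ) := rfl
      have : (toR2 c).2 = (c.2:ℝ) := rfl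
      dsimp [toR2] at h2
      linarith
    · have hle := tri_lf_le hr2 hs2 hEq2 hc
      have h2 := hau.2
      simp only [mem_setOf_eq] at h2
      dsimp [toR2] at h2
      linarith
  have hBA : ∀ b ∈ SB, b ∉ convexHull ℝ (Afin : Set Pt) := by
    intro b hb hbh
    rw [hAcoe] at hbh
    rw [hSB, Finset.mem_image] at hb
    obtain ⟨p, hp, rfl⟩ := hb
    obtain ⟨hp1, hp2, hpn⟩ := hSBLmem p hp
    exact hpn ((hJmem p).2 ⟨⟨hp1, hp2⟩, hbh⟩)
  have hSBquad : (SB : Set Pt) ⊆ {p : Pt | 1 ≤ p.1 ∧ 1 ≤ p.2} := by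
    intro b hb
    rw [hSB] at hb
    rw [Finset.coe_image] at hb
    obtain ⟨p, hpm, rfl⟩ := hb
    obtain ⟨hp1, hp2, _⟩ := hSBLmem p (Finset.mem_coe.1 hpm)
    constructor
    · show (1:ℝ) ≤ (p.1:ℝ); exact_mod_cast hp1
    · show (1:ℝ) ≤ (p.2:ℝ); exact_mod_cast hp2
  have hdownE : ∀ p ∈ convexHull ℝ (SB : Set Pt), ∀ v ∈ convexHull ℝ (Afin : Set Pt),
      p ≤ v → p ∈ convexHull ℝ (Afin : Set Pt) := by
    intro p hp v hv hle
    have hpq : p ∈ {q : Pt | 1 ≤ q.1 ∧ 1 ≤ q.2} := convexHull_min hSBquad convex_quadrant hp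
    rw [hAcoe] at hv ⊢
    exact hull_downclosed hApos hAdown v hv p hpq.1 hpq.2 (Prod.le_def.1 hle).1 (Prod.le_def.1 hle).2
  have hdisj := engine Afin SB U hUconv hUup hBU hAU hBA hdownE
  have hcomp : IsCompact (convexHull ℝ (Afin : Set Pt)) := (Afin.finite_toSet).isCompact_convexHull (𝕜 := ℝ)
  have hclosed : IsClosed (convexHull ℝ (SB : Set Pt)) :=
    ((SB.finite_toSet).isCompact_convexHull (𝕜 := ℝ)).isClosed
  have hdisj2 : Disjoint (convexHull ℝ (Afin : Set Pt)) (convexHull ℝ (SB : Set Pt)) := by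
    rw [Set.disjoint_left]
    intro z hzA hzB
    exact hdisj z hzB hzA
  obtain ⟨f, u, v, hfu, huv, hfv⟩ := geometric_hahn_banach_compact_closed
    (convex_convexHull ℝ _) hcomp (convex_convexHull ℝ _) hclosed hdisj2
  obtain ⟨α, hα⟩ : ∃ a, a = f (((1:ℝ),(0:ℝ)) : Pt) := ⟨_, rfl⟩
  obtain ⟨β, hβ⟩ : ∃ b, b = f (((0:ℝ),(1:ℝ)) : Pt) := ⟨_, rfl⟩
  have hfp : ∀ p : Pt, f p = p.1 * α + p.2 * β := by
    intro p
    have hdecomp : p = p.1 • (((1:ℝ),(0:ℝ)) : Pt) + p.2 • (((0:ℝ),(1:ℝ)) : Pt) := by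
      apply Prod.ext
      · show p.1 = p.1 * 1 + p.2 * 0
        ring
      · show p.2 = p.1 * 0 + p.2 * 1
        ring
    conv_lhs => rw [hdecomp]
    rw [map_add, map_smul, map_smul, smul_eq_mul, smul_eq_mul, hα, hβ]
  have h11J : toR2 (1,1) ∈ (Afin : Set Pt) := by
    rw [hAcoe]
    exact ⟨(1,1), h11, rfl⟩
  have hf11 : f (toR2 (1,1)) < u := hfu _ (subset_convexHull ℝ _ h11J)
  have he2 : (1:ℝ) * α + (1:ℝ) * β < u := by
    have := hf11
    rw [hfp] at this
    have e1 : (toR2 ((1:ℕ),(1:ℕ))).1 = ((1:ℕ):ℝ) := rfl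
    have e2 : (toR2 ((1:ℕ),(1:ℕ))).2 = ((1:ℕ):ℝ) := rfl
    rw [e1, e2] at this
    push_cast at this
    linarith
  have hmemSB : ∀ p ∈ SBL, toR2 p ∈ convexHull ℝ (SB : Set Pt) := by
    intro p hp
    apply subset_convexHull
    rw [hSB, Finset.coe_image]
    exact ⟨p, Finset.mem_coe.2 hp, rfl⟩
  have hfarxmem : ((X0+1 : ℕ), colMin (X0+1)) ∈ SBL := by
    rw [hSBL, Finset.mem_image]
    exact ⟨X0+1, Finset.mem_Icc.2 ⟨by omega, le_refl _⟩, rfl⟩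
  have he1 : ((X0:ℝ)+1) * α + (1:ℝ) * β > v := by
    have h := hfv _ (hmemSB _ hfarxmem)
    rw [hfp] at h
    have e1 : (toR2 ((X0+1 : ℕ), colMin (X0+1))).1 = ((X0+1:ℕ):ℝ) := rfl
    have e2 : (toR2 ((X0+1 : ℕ), colMin (X0+1))).2 = ((colMin (X0+1):ℕ):ℝ) := rfl
    rw [e1, e2, hcolfar] at h
    push_cast at h
    linarith
  have hcol2 : 2 ≤ colMin 1 := by
    have h1 := (hcolMin 1).1.1
    have h2 := (hcolMin 1).1.2
    by_contra hlt
    push_neg at hlt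
    have : colMin 1 = 1 := by omega
    rw [this] at h2
    exact h2 (hAJ h11)
  have hfarymem : ((1:ℕ), colMin 1) ∈ SBL := by
    rw [hSBL, Finset.mem_image]
    exact ⟨1, Finset.mem_Icc.2 ⟨le_refl _, by omega⟩, rfl⟩
  have he3 : (1:ℝ) * α + ((colMin 1 : ℕ):ℝ) * β > v := by
    have h := hfv _ (hmemSB _ hfarymem)
    rw [hfp] at h
    have e1 : (toR2 ((1:ℕ), colMin 1)).1 = ((1:ℕ):ℝ) := rfl
    have e2 : (toR2 ((1:ℕ), colMin 1)).2 = ((colMin 1:ℕ):ℝ) := rfl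
    rw [e1, e2] at h
    push_cast at h
    linarith
  have hX0cast : (1:ℝ) ≤ (X0:ℝ) := by exact_mod_cast hX01
  have hcolcast : (2:ℝ) ≤ ((colMin 1 : ℕ):ℝ) := by exact_mod_cast hcol2
  have hαpos : 0 < α := by nlinarith
  have hβpos : 0 < β := by nlinarith
  obtain ⟨m, hm⟩ : ∃ m : ℝ, m = (u+v)/2 := ⟨_, rfl⟩
  have hum : u < m := by rw [hm]; linarith
  have hmv : m < v := by rw [hm]; linarith
  have hm0 : 0 < m := by
    have : 0 < α + β := by linarith
    linarith
  refine ⟨m/α, m/β, by positivity, by positivity, ?_⟩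
  ext c
  constructor
  · intro hc
    obtain ⟨hcq, hch⟩ := (hJmem c).1 hc
    refine ⟨hcq.1, hcq.2, ?_⟩
    have hmem : toR2 c ∈ convexHull ℝ (Afin : Set Pt) := by
      rw [hAcoe]
      exact hch
    have hval := hfu _ hmem
    rw [hfp] at hval
    have e1 : (toR2 c).1 = (c.1:ℝ) := rfl
    have e2 : (toR2 c).2 = (c.2:ℝ) := rfl
    rw [e1, e2] at hval
    have heqv : (c.1:ℝ)/(m/α) + (c.2:ℝ)/(m/β) = ((c.1:ℝ) * α + (c.2:ℝ) * β)/m := by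
      field_simp
    rw [heqv, div_le_one hm0]
    linarith
  · rintro ⟨h1, h2, h3⟩
    by_contra hnc
    obtain ⟨p, hpSB, hple1, hple2⟩ := hdom c ⟨h1, h2⟩ hnc
    have hval := hfv _ (hmemSB _ hpSB)
    rw [hfp] at hval
    have e1 : (toR2 p).1 = (p.1:ℝ) := rfl
    have e2 : (toR2 p).2 = (p.2:ℝ) := rfl
    rw [e1, e2] at hval
    have g1 : (p.1:ℝ) ≤ (c.1:ℝ) := by exact_mod_cast hple1
    have g2 : (p.2:ℝ) ≤ (c.2:ℝ) := by exact_mod_cast hple2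
    have heqv : (c.1:ℝ)/(m/α) + (c.2:ℝ)/(m/β) = ((c.1:ℝ) * α + (c.2:ℝ) * β)/m := by
      field_simp
    rw [heqv, div_le_one hm0] at h3
    nlinarith

end Stmt6

namespace Stmt6

set_option maxHeartbeats 4000000 in
theorem meet_triangular (S1 S2 : Set (ℕ × ℕ)) (r1 s1 r2 s2 : ℝ)
    (hr1 : 0 < r1) (hs1 : 0 < s1) (hr2 : 0 < r2) (hs2 : 0 < s2)
    (hEq1 : S1 = {c : ℕ × ℕ | 1 ≤ c.1 ∧ 1 ≤ c.2 ∧ (c.1 : ℝ) / r1 + (c.2 : ℝ) / s1 ≤ 1})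
    (hEq2 : S2 = {c : ℕ × ℕ | 1 ≤ c.1 ∧ 1 ≤ c.2 ∧ (c.1 : ℝ) / r2 + (c.2 : ℝ) / s2 ≤ 1}) :
    IsTriangularSet {c : ℕ × ℕ | c ∈ posQuad ∧
      toR2 c ∉ convexHull ℝ (toR2 '' (posQuad \ (S1 ∩ S2)))} := by
  classical
  obtain ⟨D, hD⟩ : ∃ D, D = posQuad \ (S1 ∩ S2) := ⟨_, rfl⟩
  obtain ⟨Mset, hM⟩ : ∃ M, M = {c : ℕ × ℕ | c ∈ posQuad ∧
      toR2 c ∉ convexHull ℝ (toR2 '' (posQuad \ (S1 ∩ S2)))} := ⟨_, rfl⟩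
  rw [← hM]
  have hMmem : ∀ c : ℕ × ℕ, c ∈ Mset ↔ c ∈ posQuad ∧ toR2 c ∉ convexHull ℝ (toR2 '' D) := by
    intro c
    rw [hM, hD]
    rfl
  have hDup : ∀ c ∈ D, ∀ c' : ℕ × ℕ, c.1 ≤ c'.1 → c.2 ≤ c'.2 → c' ∈ D := by
    rw [hD]
    rintro c ⟨hcp, hcn⟩ c' h1 h2
    refine ⟨⟨le_trans hcp.1 h1, le_trans hcp.2 h2⟩, fun hmem => hcn ?_⟩
    exact ⟨tri_down hr1 hs1 hEq1 hmem.1 hcp h1 h2, tri_down hr2 hs2 hEq2 hmem.2 hcp h1 h2⟩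
  have hMsub : Mset ⊆ S1 ∩ S2 := by
    intro c hc
    obtain ⟨hcp, hch⟩ := (hMmem c).1 hc
    by_contra hn
    exact hch (subset_convexHull ℝ _ ⟨c, by rw [hD]; exact ⟨hcp, hn⟩, rfl⟩)
  have hMpos : Mset ⊆ posQuad := fun c hc => ((hMmem c).1 hc).1
  have hMdown : ∀ c ∈ Mset, ∀ c' : ℕ × ℕ, c' ∈ posQuad → c'.1 ≤ c.1 → c'.2 ≤ c.2 → c' ∈ Mset := by
    intro c hc c' hc' h1 h2
    obtain ⟨hcp, hch⟩ := (hMmem c).1 hc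
    refine (hMmem c').2 ⟨hc', fun hmem => hch ?_⟩
    refine hull_upclosed hDup _ hmem (toR2 c) ?_ ?_
    · show (c'.1:ℝ) ≤ (c.1:ℝ); exact_mod_cast h1
    · show (c'.2:ℝ) ≤ (c.2:ℝ); exact_mod_cast h2
  by_cases h11 : (1,1) ∈ Mset
  case neg =>
    have hMe : Mset = ∅ := by
      ext c
      simp only [mem_empty_iff_false, iff_false]
      intro hc
      exact h11 (hMdown c hc (1,1) ⟨le_refl 1, le_refl 1⟩ (hMpos hc).1 (hMpos hc).2)
    rw [hMe]
    exact empty_triangular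
  case pos =>
  have h11S : (1,1) ∈ S1 ∩ S2 := hMsub h11
  obtain ⟨X1, hX1⟩ : ∃ X1 : ℕ, X1 = ⌈r1⌉₊ := ⟨_, rfl⟩
  obtain ⟨Y1, hY1⟩ : ∃ Y1 : ℕ, Y1 = ⌈s1⌉₊ := ⟨_, rfl⟩
  have hX11 : 1 ≤ X1 := by rw [hX1]; exact Nat.one_le_ceil_iff.2 hr1
  have hr1X : r1 ≤ (X1:ℝ) := by rw [hX1]; exact Nat.le_ceil r1
  have hs1Y : s1 ≤ (Y1:ℝ) := by rw [hY1]; exact Nat.le_ceil s1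
  have hS1b1 : ∀ c ∈ S1, c.1 ≤ X1 := by
    intro c hc
    have h := tri_bound1 hr1 hs1 hEq1 hc
    have h2 : (c.1:ℝ) ≤ (X1:ℝ) := le_trans h hr1X
    exact_mod_cast h2
  have hS1b2 : ∀ c ∈ S1, c.2 ≤ Y1 := by
    intro c hc
    have h := tri_bound2 hr1 hs1 hEq1 hc
    have h2 : (c.2:ℝ) ≤ (Y1:ℝ) := le_trans h hs1Y
    exact_mod_cast h2
  have hdm : ∀ x : ℕ, ∃ y, 1 ≤ y ∧ (x, y) ∉ S1 ∩ S2 := by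
    intro x
    refine ⟨Y1 + 1, by omega, fun hmem => ?_⟩
    have h2 : Y1 + 1 ≤ Y1 := hS1b2 _ hmem.1
    omega
  obtain ⟨colMinD, hcolD⟩ : ∃ f : ℕ → ℕ, ∀ x, (1 ≤ f x ∧ (x, f x) ∉ S1 ∩ S2) ∧
      ∀ y < f x, ¬(1 ≤ y ∧ (x, y) ∉ S1 ∩ S2) :=
    ⟨fun x => Nat.find (hdm x), fun x =>
      ⟨Nat.find_spec (hdm x), fun y hy => Nat.find_min (hdm x) hy⟩⟩
  obtain ⟨SDL, hSDL⟩ : ∃ SDL : Finset (ℕ × ℕ),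
      SDL = (Finset.Icc 1 (X1+1)).image (fun x => (x, colMinD x)) := ⟨_, rfl⟩
  have hSDLD : ∀ p ∈ SDL, p ∈ D := by
    intro p hp
    rw [hSDL, Finset.mem_image] at hp
    obtain ⟨x, hx, rfl⟩ := hp
    rw [Finset.mem_Icc] at hx
    rw [hD]
    exact ⟨⟨hx.1, (hcolD x).1.1⟩, (hcolD x).1.2⟩
  have hcolfarD : colMinD (X1+1) = 1 := by
    have h1 := (hcolD (X1+1)).1.1
    by_contra hne
    have hgt : 1 < colMinD (X1+1) := by omega
    refine (hcolD (X1+1)).2 1 hgt ⟨le_refl 1, fun hmem => ?_⟩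
    have h2 : X1 + 1 ≤ X1 := hS1b1 _ hmem.1
    omega
  have hdomD : ∀ c ∈ D, ∃ p ∈ SDL, p.1 ≤ c.1 ∧ p.2 ≤ c.2 := by
    intro c hc
    have hcp : c ∈ posQuad := by rw [hD] at hc; exact hc.1
    have hcn : c ∉ S1 ∩ S2 := by rw [hD] at hc; exact hc.2
    by_cases hcx : c.1 ≤ X1 + 1
    · refine ⟨(c.1, colMinD c.1), ?_, le_refl _, ?_⟩
      · rw [hSDL, Finset.mem_image]
        exact ⟨c.1, Finset.mem_Icc.2 ⟨hcp.1, hcx⟩, rfl⟩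
      · show colMinD c.1 ≤ c.2
        by_contra hlt
        push_neg at hlt
        exact (hcolD c.1).2 c.2 hlt ⟨hcp.2, by rwa [Prod.mk.eta]⟩
    · push_neg at hcx
      refine ⟨(X1+1, colMinD (X1+1)), ?_, ?_, ?_⟩
      · rw [hSDL, Finset.mem_image]
        exact ⟨X1+1, Finset.mem_Icc.2 ⟨by omega, le_refl _⟩, rfl⟩
      · show X1+1 ≤ c.1
        omega
      · show colMinD (X1+1) ≤ c.2
        rw [hcolfarD]
        exact hcp.2
  have hMfin : Mset.Finite := by
    apply Set.Finite.subset (Set.finite_Icc ((1,1) : ℕ × ℕ) (X1, Y1))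
    intro c hc
    rw [Set.mem_Icc]
    have hc1 : c ∈ S1 := (hMsub hc).1
    exact ⟨⟨(hMpos hc).1, (hMpos hc).2⟩, ⟨hS1b1 c hc1, hS1b2 c hc1⟩⟩
  obtain ⟨MfinL, hMfinL⟩ : ∃ t : Finset (ℕ × ℕ), (t : Set (ℕ × ℕ)) = Mset :=
    ⟨hMfin.toFinset, hMfin.coe_toFinset⟩
  obtain ⟨Mfin, hMfinD⟩ : ∃ t : Finset Pt, t = MfinL.image toR2 := ⟨_, rfl⟩
  have hMcoe : (Mfin : Set Pt) = toR2 '' Mset := by rw [hMfinD, Finset.coe_image, hMfinL]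
  obtain ⟨SD, hSD⟩ : ∃ t : Finset Pt, t = SDL.image toR2 := ⟨_, rfl⟩
  obtain ⟨U, hU⟩ : ∃ U : Set Pt, U = convexHull ℝ (toR2 '' D) := ⟨_, rfl⟩
  have hUconv : Convex ℝ U := by rw [hU]; exact convex_convexHull ℝ _
  have hUup : ∀ u ∈ U, ∀ p : Pt, u ≤ p → p ∈ U := by
    intro w hw p hle
    rw [hU] at hw ⊢
    exact hull_upclosed hDup w hw p (Prod.le_def.1 hle).1 (Prod.le_def.1 hle).2
  have hBU : ∀ b ∈ SD, b ∈ U := by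
    intro b hb
    rw [hSD, Finset.mem_image] at hb
    obtain ⟨p, hp, rfl⟩ := hb
    rw [hU]
    exact subset_convexHull ℝ _ ⟨p, hSDLD p hp, rfl⟩
  have hAU : ∀ a ∈ Mfin, a ∉ U := by
    intro a ha hau
    rw [hMfinD, Finset.mem_image] at ha
    obtain ⟨c, hcL, rfl⟩ := ha
    have hcM : c ∈ Mset := by rw [← hMfinL]; exact Finset.mem_coe.2 hcL
    rw [hU] at hau
    exact ((hMmem c).1 hcM).2 hau
  have hVbar : convexHull ℝ (toR2 '' Mset) ⊆
      {p : Pt | p.1/r1 + p.2/s1 ≤ 1} ∩ {p : Pt | p.1/r2 + p.2/s2 ≤ 1} := by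
    apply convexHull_min _ ((convex_halfSpace_le (isLinearMap_lf r1 s1) 1).inter
      (convex_halfSpace_le (isLinearMap_lf r2 s2) 1))
    rintro p ⟨c, hc, rfl⟩
    have h1 := tri_lf_le hr1 hs1 hEq1 (hMsub hc).1
    have h2 := tri_lf_le hr2 hs2 hEq2 (hMsub hc).2
    exact ⟨h1, h2⟩
  have hBA : ∀ b ∈ SD, b ∉ convexHull ℝ (Mfin : Set Pt) := by
    intro b hb hbh
    rw [hMcoe] at hbh
    rw [hSD, Finset.mem_image] at hb
    obtain ⟨p, hp, rfl⟩ := hb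
    have hpD := hSDLD p hp
    have hpp : p ∈ posQuad := by rw [hD] at hpD; exact hpD.1
    have hpn : p ∉ S1 ∩ S2 := by rw [hD] at hpD; exact hpD.2
    obtain ⟨hv1, hv2⟩ := hVbar hbh
    simp only [mem_setOf_eq] at hv1 hv2
    exact hpn ⟨tri_mem_of hr1 hs1 hEq1 hpp.1 hpp.2 hv1, tri_mem_of hr2 hs2 hEq2 hpp.1 hpp.2 hv2⟩
  have hSDquad : (SD : Set Pt) ⊆ {p : Pt | 1 ≤ p.1 ∧ 1 ≤ p.2} := by
    intro b hb
    rw [hSD] at hb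
    rw [Finset.coe_image] at hb
    obtain ⟨p, hpm, rfl⟩ := hb
    have hpD := hSDLD p (Finset.mem_coe.1 hpm)
    have hpp : p ∈ posQuad := by rw [hD] at hpD; exact hpD.1
    constructor
    · show (1:ℝ) ≤ (p.1:ℝ); exact_mod_cast hpp.1
    · show (1:ℝ) ≤ (p.2:ℝ); exact_mod_cast hpp.2
  have hdownE : ∀ p ∈ convexHull ℝ (SD : Set Pt), ∀ v ∈ convexHull ℝ (Mfin : Set Pt),
      p ≤ v → p ∈ convexHull ℝ (Mfin : Set Pt) := by
    intro p hp v hv hle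
    have hpq : p ∈ {q : Pt | 1 ≤ q.1 ∧ 1 ≤ q.2} := convexHull_min hSDquad convex_quadrant hp
    rw [hMcoe] at hv ⊢
    exact hull_downclosed hMpos hMdown v hv p hpq.1 hpq.2 (Prod.le_def.1 hle).1 (Prod.le_def.1 hle).2
  have hdisj := engine Mfin SD U hUconv hUup hBU hAU hBA hdownE
  have hcomp : IsCompact (convexHull ℝ (Mfin : Set Pt)) := (Mfin.finite_toSet).isCompact_convexHull (𝕜 := ℝ)
  have hclosed : IsClosed (convexHull ℝ (SD : Set Pt)) :=
    ((SD.finite_toSet).isCompact_convexHull (𝕜 := ℝ)).isClosed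
  have hdisj2 : Disjoint (convexHull ℝ (Mfin : Set Pt)) (convexHull ℝ (SD : Set Pt)) := by
    rw [Set.disjoint_left]
    intro z hzA hzB
    exact hdisj z hzB hzA
  obtain ⟨f, u, v, hfu, huv, hfv⟩ := geometric_hahn_banach_compact_closed
    (convex_convexHull ℝ _) hcomp (convex_convexHull ℝ _) hclosed hdisj2
  obtain ⟨α, hα⟩ : ∃ a, a = f (((1:ℝ),(0:ℝ)) : Pt) := ⟨_, rfl⟩
  obtain ⟨β, hβ⟩ : ∃ b, b = f (((0:ℝ),(1:ℝ)) : Pt) := ⟨_, rfl⟩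
  have hfp : ∀ p : Pt, f p = p.1 * α + p.2 * β := by
    intro p
    have hdecomp : p = p.1 • (((1:ℝ),(0:ℝ)) : Pt) + p.2 • (((0:ℝ),(1:ℝ)) : Pt) := by
      apply Prod.ext
      · show p.1 = p.1 * 1 + p.2 * 0
        ring
      · show p.2 = p.1 * 0 + p.2 * 1
        ring
    conv_lhs => rw [hdecomp]
    rw [map_add, map_smul, map_smul, smul_eq_mul, smul_eq_mul, hα, hβ]
  have h11M : toR2 (1,1) ∈ (Mfin : Set Pt) := by
    rw [hMcoe]
    exact ⟨(1,1), h11, rfl⟩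
  have hf11 : f (toR2 (1,1)) < u := hfu _ (subset_convexHull ℝ _ h11M)
  have he2 : (1:ℝ) * α + (1:ℝ) * β < u := by
    have h := hf11
    rw [hfp] at h
    have e1 : (toR2 ((1:ℕ),(1:ℕ))).1 = ((1:ℕ):ℝ) := rfl
    have e2 : (toR2 ((1:ℕ),(1:ℕ))).2 = ((1:ℕ):ℝ) := rfl
    rw [e1, e2] at h
    push_cast at h
    linarith
  have hmemSD : ∀ p ∈ SDL, toR2 p ∈ convexHull ℝ (SD : Set Pt) := by
    intro p hp
    apply subset_convexHull
    rw [hSD, Finset.coe_image]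
    exact ⟨p, Finset.mem_coe.2 hp, rfl⟩
  have hfarxmem : ((X1+1 : ℕ), colMinD (X1+1)) ∈ SDL := by
    rw [hSDL, Finset.mem_image]
    exact ⟨X1+1, Finset.mem_Icc.2 ⟨by omega, le_refl _⟩, rfl⟩
  have he1 : ((X1:ℝ)+1) * α + (1:ℝ) * β > v := by
    have h := hfv _ (hmemSD _ hfarxmem)
    rw [hfp] at h
    have e1 : (toR2 ((X1+1 : ℕ), colMinD (X1+1))).1 = ((X1+1:ℕ):ℝ) := rfl
    have e2 : (toR2 ((X1+1 : ℕ), colMinD (X1+1))).2 = ((colMinD (X1+1):ℕ):ℝ) := rfl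
    rw [e1, e2, hcolfarD] at h
    push_cast at h
    linarith
  have hcolD2 : 2 ≤ colMinD 1 := by
    have h1 := (hcolD 1).1.1
    have h2 := (hcolD 1).1.2
    by_contra hlt
    push_neg at hlt
    have he : colMinD 1 = 1 := by omega
    rw [he] at h2
    exact h2 h11S
  have hfarymem : ((1:ℕ), colMinD 1) ∈ SDL := by
    rw [hSDL, Finset.mem_image]
    exact ⟨1, Finset.mem_Icc.2 ⟨le_refl _, by omega⟩, rfl⟩
  have he3 : (1:ℝ) * α + ((colMinD 1 : ℕ):ℝ) * β > v := by
    have h := hfv _ (hmemSD _ hfarymem)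
    rw [hfp] at h
    have e1 : (toR2 ((1:ℕ), colMinD 1)).1 = ((1:ℕ):ℝ) := rfl
    have e2 : (toR2 ((1:ℕ), colMinD 1)).2 = ((colMinD 1:ℕ):ℝ) := rfl
    rw [e1, e2] at h
    push_cast at h
    linarith
  have hX1cast : (1:ℝ) ≤ (X1:ℝ) := by exact_mod_cast hX11
  have hcolcast : (2:ℝ) ≤ ((colMinD 1 : ℕ):ℝ) := by exact_mod_cast hcolD2
  have hαpos : 0 < α := by nlinarith
  have hβpos : 0 < β := by nlinarith
  obtain ⟨m, hm⟩ : ∃ m : ℝ, m = (u+v)/2 := ⟨_, rfl⟩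
  have hum : u < m := by rw [hm]; linarith
  have hmv : m < v := by rw [hm]; linarith
  have hm0 : 0 < m := by
    have : 0 < α + β := by linarith
    linarith
  have hflin : IsLinearMap ℝ (fun p : Pt => f p) :=
    ⟨fun x y => map_add f x y, fun c x => map_smul f c x⟩
  have hDhalf : convexHull ℝ (toR2 '' D) ⊆ {p : Pt | v < f p} := by
    apply convexHull_min _ (convex_halfSpace_gt hflin v)
    rintro p ⟨d, hd, rfl⟩
    obtain ⟨q, hqSD, hq1, hq2⟩ := hdomD d hd
    have hval := hfv _ (hmemSD _ hqSD)
    rw [hfp] at hval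
    show v < f (toR2 d)
    rw [hfp]
    have e1 : (toR2 q).1 = (q.1:ℝ) := rfl
    have e2 : (toR2 q).2 = (q.2:ℝ) := rfl
    rw [e1, e2] at hval
    have g1 : (q.1:ℝ) ≤ (d.1:ℝ) := by exact_mod_cast hq1
    have g2 : (q.2:ℝ) ≤ (d.2:ℝ) := by exact_mod_cast hq2
    have e3 : (toR2 d).1 = (d.1:ℝ) := rfl
    have e4 : (toR2 d).2 = (d.2:ℝ) := rfl
    rw [e3, e4]
    nlinarith
  refine ⟨m/α, m/β, by positivity, by positivity, ?_⟩
  ext c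
  constructor
  · intro hc
    have hcq := hMpos hc
    refine ⟨hcq.1, hcq.2, ?_⟩
    have hmem : toR2 c ∈ convexHull ℝ (Mfin : Set Pt) := by
      apply subset_convexHull
      rw [hMcoe]
      exact ⟨c, hc, rfl⟩
    have hval := hfu _ hmem
    rw [hfp] at hval
    have e1 : (toR2 c).1 = (c.1:ℝ) := rfl
    have e2 : (toR2 c).2 = (c.2:ℝ) := rfl
    rw [e1, e2] at hval
    have heqv : (c.1:ℝ)/(m/α) + (c.2:ℝ)/(m/β) = ((c.1:ℝ) * α + (c.2:ℝ) * β)/m := by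
      field_simp
    rw [heqv, div_le_one hm0]
    linarith
  · rintro ⟨h1, h2, h3⟩
    refine (hMmem c).2 ⟨⟨h1, h2⟩, fun hch => ?_⟩
    have hgt := hDhalf hch
    simp only [mem_setOf_eq] at hgt
    rw [hfp] at hgt
    have e1 : (toR2 c).1 = (c.1:ℝ) := rfl
    have e2 : (toR2 c).2 = (c.2:ℝ) := rfl
    rw [e1, e2] at hgt
    have heqv : (c.1:ℝ)/(m/α) + (c.2:ℝ)/(m/β) = ((c.1:ℝ) * α + (c.2:ℝ) * β)/m := by
      field_simp
    rw [heqv, div_le_one hm0] at h3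
    linarith

end Stmt6

open Stmt6 in
/-- the join of two triangular partitions is ℕ² ∩ Conv(τ ∪ ν) and
their meet is ℕ² \ (ℕ² ∩ Conv(ℕ² \ (τ ∩ ν))). -/
theorem stmt6 (τ ν : TriPart) :
    (∃ h : IsTriangularSet
        {c : ℕ × ℕ | c ∈ posQuad ∧ toR2 c ∈ convexHull ℝ (toR2 '' (τ.1 ∪ ν.1))},
      IsLUB ({τ, ν} : Set TriPart) ⟨_, h⟩) ∧
    (∃ h : IsTriangularSet
        {c : ℕ × ℕ | c ∈ posQuad ∧
          toR2 c ∉ convexHull ℝ (toR2 '' (posQuad \ (τ.1 ∩ ν.1)))},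
      IsGLB ({τ, ν} : Set TriPart) ⟨_, h⟩) := by
  obtain ⟨r1, s1, hr1, hs1, hEq1⟩ := τ.2
  obtain ⟨r2, s2, hr2, hs2, hEq2⟩ := ν.2
  constructor
  · refine ⟨join_triangular τ.1 ν.1 r1 s1 r2 s2 hr1 hs1 hr2 hs2 hEq1 hEq2, ?_, ?_⟩
    · rintro x hx
      simp only [Set.mem_insert_iff, Set.mem_singleton_iff] at hx
      show x.1 ⊆ _
      rcases hx with rfl | rfl
      · intro c hc
        exact ⟨tri_pos_mem hr1 hs1 hEq1 hc, subset_convexHull ℝ _ ⟨c, Or.inl hc, rfl⟩⟩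
      · intro c hc
        exact ⟨tri_pos_mem hr2 hs2 hEq2 hc, subset_convexHull ℝ _ ⟨c, Or.inr hc, rfl⟩⟩
    · rintro W hW
      have hτ : τ.1 ⊆ W.1 := hW (Set.mem_insert _ _)
      have hν : ν.1 ⊆ W.1 := hW (Set.mem_insert_of_mem _ rfl)
      obtain ⟨rW, sW, hrW, hsW, hEqW⟩ := W.2
      show _ ⊆ W.1
      rintro c ⟨hcq, hch⟩
      have hhalf : convexHull ℝ (toR2 '' (τ.1 ∪ ν.1)) ⊆ {p : Pt | p.1/rW + p.2/sW ≤ 1} := by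
        apply convexHull_min _ (convex_halfSpace_le (isLinearMap_lf rW sW) 1)
        rintro p ⟨a, ha, rfl⟩
        have haW : a ∈ W.1 := by
          rcases ha with h | h
          exacts [hτ h, hν h]
        exact tri_lf_le hrW hsW hEqW haW
      exact tri_mem_of hrW hsW hEqW hcq.1 hcq.2 (hhalf hch)
  · refine ⟨meet_triangular τ.1 ν.1 r1 s1 r2 s2 hr1 hs1 hr2 hs2 hEq1 hEq2, ?_, ?_⟩
    · rintro x hx
      simp only [Set.mem_insert_iff, Set.mem_singleton_iff] at hx
      show _ ⊆ x.1
      rintro c ⟨hcq, hch⟩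
      have hcS : c ∈ τ.1 ∩ ν.1 := by
        by_contra hn
        exact hch (subset_convexHull ℝ _ ⟨c, ⟨hcq, hn⟩, rfl⟩)
      rcases hx with rfl | rfl
      exacts [hcS.1, hcS.2]
    · rintro L hL
      have hτ : L.1 ⊆ τ.1 := hL (Set.mem_insert _ _)
      have hν : L.1 ⊆ ν.1 := hL (Set.mem_insert_of_mem _ rfl)
      obtain ⟨rL, sL, hrL, hsL, hEqL⟩ := L.2
      show L.1 ⊆ _
      intro c hc
      refine ⟨tri_pos_mem hrL hsL hEqL hc, fun hch => ?_⟩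
      have hhalf : convexHull ℝ (toR2 '' (posQuad \ (τ.1 ∩ ν.1))) ⊆
          {p : Pt | 1 < p.1/rL + p.2/sL} := by
        apply convexHull_min _ (convex_halfSpace_gt (isLinearMap_lf rL sL) 1)
        rintro p ⟨d, hd, rfl⟩
        have hdn : d ∉ L.1 := fun hmem => hd.2 ⟨hτ hmem, hν hmem⟩
        exact tri_not_mem hrL hsL hEqL hd.1 hdn
      have h1 := hhalf hch
      have h2 := tri_lf_le hrL hsL hEqL hc
      simp only [mem_setOf_eq] at h1
      have e1 : (toR2 c).1 = (c.1:ℝ) := rfl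
      have e2 : (toR2 c).2 = (c.2:ℝ) := rfl
      rw [e1, e2] at h1
      linarith
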